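/- arXiv:1303.1019 — 5 statements merged into one kernel-verified Lean document; each statement's English description precedes it below -/
import Mathlib

section
/- If an r×r matrix Laurent polynomial A(z) satisfies the orthogonality condition A^♯(z)A(z) + A^♯(−z)A(−z) = 4I on the unit circle, and A(z) and A(−z) commute for all z on the unit circle, then B(z) := z A^♯(−z) satisfies both A^♯(z)B(z) + A^♯(−z)B(−z) = 0 and B^♯(z)B(z) + B^♯(−z)B(−z) = 4I on the unit circle. -/
open Matrix Finset MeasureTheory Module
open scoped InnerProductSpace ComplexConjugate

/-- Evaluation of the symbol `A(z) = ∑_j A_j z^j` of a finitely supported real matrix mask. -/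
noncomputable def mSymbol {r : ℕ} (A : ℤ →₀ Matrix (Fin r) (Fin r) ℝ) (z : ℂ) :
    Matrix (Fin r) (Fin r) ℂ :=
  ∑ j ∈ A.support, z ^ j • (A j).map (Complex.ofReal)

/-- `A^♯(z) = A(z⁻¹)ᵀ`. -/
noncomputable def mSharp {r : ℕ} (A : ℤ →₀ Matrix (Fin r) (Fin r) ℝ) (z : ℂ) :
    Matrix (Fin r) (Fin r) ℂ :=
  (mSymbol A z⁻¹)ᵀ

/-- The subsymbol `A_ε(z) = ∑_j A_{ε+2j} z^j`. -/
noncomputable def mSub {r : ℕ} (A : ℤ →₀ Matrix (Fin r) (Fin r) ℝ) (ε : ℤ) (z : ℂ) :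
    Matrix (Fin r) (Fin r) ℂ :=
  ∑ m ∈ A.support, if m % 2 = ε % 2 then z ^ ((m - ε) / 2) • (A m).map (Complex.ofReal) else 0

/-- Cauchy–Schwarz in ℂ²: if |t|²+|s|² = 4 and conj t * a + conj s * b = 4 then |a|²+|b|² ≥ 4. -/
lemma sphere_ineq {t s a b : ℂ} (h4 : ‖t‖ ^ 2 + ‖s‖ ^ 2 = 4)
    (h : conj t * a + conj s * b = 4) : 4 ≤ ‖a‖ ^ 2 + ‖b‖ ^ 2 := by
  have habs : (4 : ℝ) ≤ ‖t‖ * ‖a‖ + ‖s‖ * ‖b‖ := by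
    calc (4:ℝ) = ‖conj t * a + conj s * b‖ := by rw [h]; simp
    _ ≤ ‖conj t * a‖ + ‖conj s * b‖ := norm_add_le _ _
    _ = ‖t‖ * ‖a‖ + ‖s‖ * ‖b‖ := by
        simp [_root_.map_mul]
  nlinarith [sq_nonneg (‖t‖ * ‖b‖ - ‖s‖ * ‖a‖),
    norm_nonneg t, norm_nonneg s, norm_nonneg a, norm_nonneg b,
    sq_nonneg (‖t‖ * ‖a‖ + ‖s‖ * ‖b‖ - 4)]

set_option maxHeartbeats 1000000 in
/-- Main induction: commuting pair with `X†X + Y†Y = 4` admits an orthonormal eigenbasis with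
eigenvalue pairs on the sphere of radius 2. -/
lemma diagKey : ∀ (n : ℕ) (V : Type) [NormedAddCommGroup V] [InnerProductSpace ℂ V]
    [FiniteDimensional ℂ V], finrank ℂ V = n → ∀ X Y : V →ₗ[ℂ] V,
    (∀ v, X (Y v) = Y (X v)) →
    (∀ w w' : V, ⟪X w, X w'⟫_ℂ + ⟪Y w, Y w'⟫_ℂ = 4 * ⟪w, w'⟫_ℂ) →
    ∃ (v : Fin n → V) (t s : Fin n → ℂ), Orthonormal ℂ v ∧
      (⊤ : Submodule ℂ V) ≤ Submodule.span ℂ (Set.range v) ∧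
      ∀ i, X (v i) = t i • v i ∧ Y (v i) = s i • v i ∧
        ‖t i‖ ^ 2 + ‖s i‖ ^ 2 = 4 := by
  intro n
  induction n with
  | zero =>
    intro V _ _ _ hn X Y hc h4
    refine ⟨Fin.elim0, Fin.elim0, Fin.elim0, ?_, ?_, fun i => i.elim0⟩
    · exact ⟨fun i => i.elim0, fun i => i.elim0⟩
    intro x _
    have : Subsingleton V := finrank_zero_iff.mp hn
    rw [Subsingleton.elim x 0]
    exact Submodule.zero_mem _
  | succ n IH =>

    intro V _ _ _ hn X Y hc h4
    haveI hnt : Nontrivial V := Module.nontrivial_of_finrank_pos (R := ℂ)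
      (by rw [hn]; exact Nat.succ_pos n)
    set Xa := LinearMap.adjoint X with hXadef
    set Ya := LinearMap.adjoint Y with hYadef
    have hcomp : X ∘ₗ Y = Y ∘ₗ X := LinearMap.ext hc
    have hca : ∀ v, Xa (Ya v) = Ya (Xa v) := by
      intro v
      have h1 : Xa ∘ₗ Ya = LinearMap.adjoint (Y ∘ₗ X) := (LinearMap.adjoint_comp Y X).symm
      have h2 : Ya ∘ₗ Xa = LinearMap.adjoint (X ∘ₗ Y) := (LinearMap.adjoint_comp X Y).symm
      have : Xa ∘ₗ Ya = Ya ∘ₗ Xa := by rw [h1, h2, hcomp]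
      exact LinearMap.congr_fun this v
    obtain ⟨α, hα⟩ := Module.End.exists_eigenvalue (Xa : Module.End ℂ V)
    have hYaE : ∀ x ∈ Module.End.eigenspace Xa α, Ya x ∈ Module.End.eigenspace Xa α := by
      intro x hx
      rw [Module.End.mem_eigenspace_iff] at hx ⊢
      rw [hca x, hx, _root_.map_smul]
    haveI hEnt : Nontrivial (Module.End.eigenspace Xa α) :=
      Submodule.nontrivial_iff_ne_bot.mpr hα
    obtain ⟨β, hβ⟩ := Module.End.exists_eigenvalue (Ya.restrict hYaE : Module.End ℂ _)
    obtain ⟨w, hw⟩ := hβ.exists_hasEigenvector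
    have hw0 : (w : V) ≠ 0 := fun h => hw.2 (Subtype.ext h)
    have hYw : Ya (w : V) = β • (w : V) := by
      have h1 := Module.End.mem_eigenspace_iff.mp hw.1
      have := congrArg (Subtype.val) h1
      simpa [LinearMap.restrict_coe_apply] using this
    have hXw : Xa (w : V) = α • (w : V) := Module.End.mem_eigenspace_iff.mp w.2
    set u : V := ‖(w : V)‖⁻¹ • (w : V) with hudef
    have hu1 : ‖u‖ = 1 := norm_smul_inv_norm hw0
    have hXau : Xa u = α • u := by
      rw [hudef, LinearMap.map_smul_of_tower, hXw, smul_comm]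
    have hYau : Ya u = β • u := by
      rw [hudef, LinearMap.map_smul_of_tower, hYw, smul_comm]
    set a := conj α with hadef
    set b := conj β with hbdef
    have ha : ∀ w' : V, ⟪u, X w'⟫_ℂ = a * ⟪u, w'⟫_ℂ := by
      intro w'
      rw [← LinearMap.adjoint_inner_left, ← hXadef, hXau, inner_smul_left]
    have hb : ∀ w' : V, ⟪u, Y w'⟫_ℂ = b * ⟪u, w'⟫_ℂ := by
      intro w'
      rw [← LinearMap.adjoint_inner_left, ← hYadef, hYau, inner_smul_left]
    have huu : ⟪u, u⟫_ℂ = 1 := by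
      rw [inner_self_eq_norm_sq_to_K, hu1]; norm_num
    set W := (ℂ ∙ u)ᗮ with hWdef
    have hmemW : ∀ x : V, x ∈ W ↔ ⟪u, x⟫_ℂ = 0 := fun x =>
      Submodule.mem_orthogonal_singleton_iff_inner_right
    have hWdim : finrank ℂ W = n := by
      have h1 := Submodule.finrank_add_finrank_orthogonal (K := (ℂ ∙ u))
      have hu0 : u ≠ 0 := by intro h; rw [h] at hu1; simp at hu1
      rw [finrank_span_singleton hu0, hn] at h1
      rw [hWdef]
      omega
    have hXW : ∀ x ∈ W, X x ∈ W := by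
      intro x hx; rw [hmemW] at hx ⊢; rw [ha, hx, mul_zero]
    have hYW : ∀ x ∈ W, Y x ∈ W := by
      intro x hx; rw [hmemW] at hx ⊢; rw [hb, hx, mul_zero]
    set X₀ := X.restrict hXW with hX₀def
    set Y₀ := Y.restrict hYW with hY₀def
    have hc₀ : ∀ v, X₀ (Y₀ v) = Y₀ (X₀ v) := by
      intro v; apply Subtype.ext
      simp only [hX₀def, hY₀def, LinearMap.restrict_coe_apply]
      exact hc v
    have h4₀ : ∀ w w' : W, ⟪X₀ w, X₀ w'⟫_ℂ + ⟪Y₀ w, Y₀ w'⟫_ℂ = 4 * ⟪w, w'⟫_ℂ := by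
      intro w w'
      have := h4 (w : V) (w' : V)
      simpa only [hX₀def, hY₀def, Submodule.coe_inner, LinearMap.restrict_coe_apply] using this
    obtain ⟨v₀, t, s, hON, hsp, heig⟩ := IH W hWdim X₀ Y₀ hc₀ h4₀
    set e : Fin n → V := fun i => (v₀ i : V) with hedef
    have heu : ∀ i, ⟪u, e i⟫_ℂ = 0 := fun i => (hmemW _).mp (v₀ i).2
    have heu' : ∀ i, ⟪e i, u⟫_ℂ = 0 := fun i => inner_eq_zero_symm.mp (heu i)
    have hXe : ∀ i, X (e i) = t i • e i := by
      intro i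
      have := congrArg Subtype.val (heig i).1
      simpa only [hX₀def, LinearMap.restrict_coe_apply, Submodule.coe_smul] using this
    have hYe : ∀ i, Y (e i) = s i • e i := by
      intro i
      have := congrArg Subtype.val (heig i).2.1
      simpa only [hY₀def, LinearMap.restrict_coe_apply, Submodule.coe_smul] using this
    have hee : ∀ i j, ⟪e i, e j⟫_ℂ = if i = j then 1 else 0 := by
      intro i j
      have := orthonormal_iff_ite.mp hON i j
      rwa [Submodule.coe_inner] at this
    set p := X u - a • u with hpdef
    set q := Y u - b • u with hqdef
    have hup : ⟪u, p⟫_ℂ = 0 := by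
      rw [hpdef, inner_sub_right, ha, huu, inner_smul_right, huu]; ring
    have huq : ⟪u, q⟫_ℂ = 0 := by
      rw [hqdef, inner_sub_right, hb, huu, inner_smul_right, huu]; ring
    have hpu : ⟪p, u⟫_ℂ = 0 := inner_eq_zero_symm.mp hup
    have hqu : ⟪q, u⟫_ℂ = 0 := inner_eq_zero_symm.mp huq
    have hpW : p ∈ W := (hmemW _).mpr hup
    have hqW : q ∈ W := (hmemW _).mpr huq
    have hXu : X u = p + a • u := by rw [hpdef]; abel
    have hYu : Y u = q + b • u := by rw [hqdef]; abel
    have hXdiag : ∀ (i : Fin n) (x : W), ⟪e i, X (x : V)⟫_ℂ = t i * ⟪e i, (x : V)⟫_ℂ := by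
      intro i x
      have hx : x ∈ Submodule.span ℂ (Set.range v₀) := hsp trivial
      refine Submodule.span_induction
        (p := fun (y : W) _ => ⟪e i, X (y : V)⟫_ℂ = t i * ⟪e i, (y : V)⟫_ℂ) ?_ ?_ ?_ ?_ hx
      · rintro y ⟨j, rfl⟩
        rw [show ((v₀ j : V)) = e j from rfl, hXe j, inner_smul_right, hee]
        rcases eq_or_ne i j with rfl | hij
        · simp
        · simp [hij]
      · simp
      · intro y z _ _ hy hz
        simp only [Submodule.coe_add, _root_.map_add, inner_add_right, hy, hz]; ring
      · intro c y _ hy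
        simp only [Submodule.coe_smul, _root_.map_smul, inner_smul_right, hy]; ring
    have hinnr : ∀ x : V, ⟪x, x⟫_ℂ = ((‖x‖ ^ 2 : ℝ) : ℂ) := fun x => by
      rw [inner_self_eq_norm_sq_to_K]; norm_cast
    have hconjmul : ∀ c : ℂ, conj c * c = ((‖c‖ ^ 2 : ℝ) : ℂ) := fun c => by
      rw [Complex.sq_norm, Complex.normSq_eq_conj_mul_self]
    have hNR : ‖p‖ ^ 2 + ‖q‖ ^ 2 + ‖a‖ ^ 2 + ‖b‖ ^ 2 = 4 := by
      have h := h4 u u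
      rw [hXu, hYu, huu] at h
      have hexp : ∀ (x : V) (c : ℂ), ⟪x, u⟫_ℂ = 0 → ⟪u, x⟫_ℂ = 0 →
          ⟪x + c • u, x + c • u⟫_ℂ = ⟪x, x⟫_ℂ + conj c * c := by
        intro x c h1 h2
        simp only [inner_add_left, inner_add_right, inner_smul_left, inner_smul_right,
          h1, h2, huu]
        ring
      rw [hexp p a hpu hup, hexp q b hqu huq, hinnr, hinnr, hconjmul, hconjmul] at h
      have : ((‖p‖ ^ 2 + ‖q‖ ^ 2 + ‖a‖ ^ 2 + ‖b‖ ^ 2 : ℝ) : ℂ)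
          = ((4 : ℝ) : ℂ) := by push_cast at h ⊢; linear_combination h
      exact_mod_cast this
    have hple : p = 0 ∧ q = 0 := by
      by_cases hlt : ‖a‖ ^ 2 + ‖b‖ ^ 2 < 4
      · exfalso
        have hcoord : ∀ i, ⟪e i, p⟫_ℂ = 0 ∧ ⟪e i, q⟫_ℂ = 0 := by
          intro i
          have hPX : ⟪e i, X u⟫_ℂ = ⟪e i, p⟫_ℂ := by
            rw [hXu, inner_add_right, inner_smul_right, heu' i]; ring
          have hQY : ⟪e i, Y u⟫_ℂ = ⟪e i, q⟫_ℂ := by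
            rw [hYu, inner_add_right, inner_smul_right, heu' i]; ring
          set T := t i with hT
          set S := s i with hS
          set P := ⟪e i, p⟫_ℂ with hP
          set Q := ⟪e i, q⟫_ℂ with hQ
          have hdag : conj T * P + conj S * Q = 0 := by
            have h := h4 (e i) u
            rw [hXe i, hYe i, inner_smul_left, inner_smul_left, hPX, hQY, heu' i] at h
            linear_combination h
          have hcross : (T - a) * Q = (S - b) * P := by
            have h1 := hc u
            have h2 : ⟪e i, X (Y u)⟫_ℂ = T * Q + b * P := by
              rw [hYu, _root_.map_add, _root_.map_smul, inner_add_right, inner_smul_right,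
                hXdiag i ⟨q, hqW⟩, hPX]
            have h3 : ⟪e i, Y (X u)⟫_ℂ = S * P + a * Q := by
              have hYdiag : ∀ (x : W), ⟪e i, Y (x : V)⟫_ℂ = S * ⟪e i, (x : V)⟫_ℂ := by
                intro x
                have hx : x ∈ Submodule.span ℂ (Set.range v₀) := hsp trivial
                refine Submodule.span_induction
                  (p := fun (y : W) _ => ⟪e i, Y (y : V)⟫_ℂ = S * ⟪e i, (y : V)⟫_ℂ)
                  ?_ ?_ ?_ ?_ hx
                · rintro y ⟨j, rfl⟩
                  rw [show ((v₀ j : V)) = e j from rfl, hYe j, inner_smul_right, hee]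
                  rcases eq_or_ne i j with rfl | hij
                  · simp [hS]
                  · simp [hij]
                · simp
                · intro y z _ _ hy hz
                  simp only [Submodule.coe_add, _root_.map_add, inner_add_right, hy, hz]; ring
                · intro c y _ hy
                  simp only [Submodule.coe_smul, _root_.map_smul, inner_smul_right, hy]; ring
              rw [hXu, _root_.map_add, _root_.map_smul, inner_add_right, inner_smul_right,
                hYdiag ⟨p, hpW⟩, hQY]
            rw [h1] at h2
            rw [h2] at h3
            linear_combination h3
          have hTS : conj T * T + conj S * S = 4 := by
            rw [hconjmul, hconjmul]
            have := (heig i).2.2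
            rw [← hT, ← hS] at this
            rw [← Complex.ofReal_add, this]
            norm_num
          by_cases hc4 : conj T * a + conj S * b = 4
          · have hTSabs : ‖T‖ ^ 2 + ‖S‖ ^ 2 = 4 := by
              have := (heig i).2.2
              rwa [← hT, ← hS] at this
            exact absurd (sphere_ineq hTSabs hc4) (by linarith)
          · have hcne : conj T * a + conj S * b - 4 ≠ 0 := sub_ne_zero.mpr hc4
            constructor
            · have hcP : (conj T * a + conj S * b - 4) * P = 0 := by
                linear_combination (-(T - a)) * hdag + conj S * hcross + P * hTS
              exact (mul_eq_zero.mp hcP).resolve_left hcne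
            · have hcQ : (conj T * a + conj S * b - 4) * Q = 0 := by
                linear_combination (-(S - b)) * hdag - conj T * hcross + Q * hTS
              exact (mul_eq_zero.mp hcQ).resolve_left hcne
        have hz0 : ∀ (x : V) (hxW : x ∈ W), (∀ i, ⟪e i, x⟫_ℂ = 0) → x = 0 := by
          intro x hxW hco
          have hxspan : (⟨x, hxW⟩ : W) ∈ Submodule.span ℂ (Set.range v₀) := hsp trivial
          have hself : ⟪(⟨x, hxW⟩ : W), (⟨x, hxW⟩ : W)⟫_ℂ = 0 := by
            refine Submodule.span_induction
              (p := fun (y : W) _ => ⟪(⟨x, hxW⟩ : W), y⟫_ℂ = 0) ?_ ?_ ?_ ?_ hxspan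
            · rintro y ⟨j, rfl⟩
              rw [Submodule.coe_inner]
              exact inner_eq_zero_symm.mp (hco j)
            · simp
            · intro y z _ _ hy hz
              rw [inner_add_right, hy, hz, add_zero]
            · intro c y _ hy
              rw [inner_smul_right, hy, mul_zero]
          have := inner_self_eq_zero.mp hself
          exact congrArg Subtype.val this
        have hp0 : p = 0 := hz0 p hpW fun i => (hcoord i).1
        have hq0 : q = 0 := hz0 q hqW fun i => (hcoord i).2
        rw [hp0, hq0] at hNR
        simp only [norm_zero] at hNR
        nlinarith
      · push_neg at hlt
        have h1 : ‖p‖ ^ 2 + ‖q‖ ^ 2 ≤ 0 := by linarith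
        have hp0 : p = 0 := by
          have : ‖p‖ = 0 := by nlinarith [norm_nonneg p, norm_nonneg q, sq_nonneg ‖p‖, sq_nonneg ‖q‖]
          exact norm_eq_zero.mp this
        have hq0 : q = 0 := by
          have : ‖q‖ = 0 := by nlinarith [norm_nonneg p, norm_nonneg q, sq_nonneg ‖p‖, sq_nonneg ‖q‖]
          exact norm_eq_zero.mp this
        exact ⟨hp0, hq0⟩
    obtain ⟨hp0, hq0⟩ := hple
    have hXu' : X u = a • u := by
      have := hpdef ▸ hp0
      rw [sub_eq_zero] at this; exact this
    have hYu' : Y u = b • u := by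
      have := hqdef ▸ hq0
      rw [sub_eq_zero] at this; exact this
    have hab : ‖a‖ ^ 2 + ‖b‖ ^ 2 = 4 := by
      rw [hp0, hq0] at hNR
      simpa using hNR
    refine ⟨Fin.snoc e u, Fin.snoc t a, Fin.snoc s b, ?_, ?_, ?_⟩
    · rw [orthonormal_iff_ite]
      intro i j
      refine Fin.lastCases ?_ (fun i' => ?_) i
      · refine Fin.lastCases ?_ (fun j' => ?_) j
        · simp [Fin.snoc_last, huu, hu1]
        · have : Fin.last n ≠ j'.castSucc := (Fin.castSucc_lt_last j').ne'
          simp [Fin.snoc_last, Fin.snoc_castSucc, heu, this]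
      · refine Fin.lastCases ?_ (fun j' => ?_) j
        · have : i'.castSucc ≠ Fin.last n := (Fin.castSucc_lt_last i').ne
          simp [Fin.snoc_last, Fin.snoc_castSucc, heu' i', this]
        · rw [Fin.snoc_castSucc, Fin.snoc_castSucc, hee i' j']
          simp [Fin.castSucc_inj]
    · intro x _
      set y := x - ⟪u, x⟫_ℂ • u with hydef
      have hyW : y ∈ W := by
        rw [hmemW, hydef, inner_sub_right, inner_smul_right, huu]; ring
      have hyspan : (⟨y, hyW⟩ : W) ∈ Submodule.span ℂ (Set.range v₀) := hsp trivial
      have hy2 : y ∈ Submodule.span ℂ (Set.range (Fin.snoc e u : Fin (n + 1) → V)) := by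
        have h5 : y ∈ Submodule.map W.subtype (Submodule.span ℂ (Set.range v₀)) :=
          ⟨⟨y, hyW⟩, hyspan, rfl⟩
        rw [Submodule.map_span] at h5
        refine Submodule.span_mono ?_ h5
        rintro _ ⟨_, ⟨j, rfl⟩, rfl⟩
        exact ⟨j.castSucc, by simp [Fin.snoc_castSucc, hedef]⟩
      have hu2 : u ∈ Submodule.span ℂ (Set.range (Fin.snoc e u : Fin (n + 1) → V)) :=
        Submodule.subset_span ⟨Fin.last n, by simp [Fin.snoc_last]⟩
      have hxeq : x = y + ⟪u, x⟫_ℂ • u := by rw [hydef]; abel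
      rw [hxeq]
      exact Submodule.add_mem _ hy2 (Submodule.smul_mem _ _ hu2)
    · intro i
      refine Fin.lastCases ?_ (fun i' => ?_) i
      · simp only [Fin.snoc_last]
        exact ⟨hXu', hYu', hab⟩
      · simp only [Fin.snoc_castSucc]
        exact ⟨hXe i', hYe i', (heig i').2.2⟩


set_option maxHeartbeats 1000000 in
lemma key_matrix {r : ℕ} (X Y : Matrix (Fin r) (Fin r) ℂ) (hcm : X * Y = Y * X)
    (h : Xᴴ * X + Yᴴ * Y = (4 : Matrix (Fin r) (Fin r) ℂ)) :
    X * Xᴴ + Y * Yᴴ = (4 : Matrix (Fin r) (Fin r) ℂ) := by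
  have h4m : (4 : Matrix (Fin r) (Fin r) ℂ) = (4 : ℂ) • (1 : Matrix (Fin r) (Fin r) ℂ) := by
    rw [Matrix.smul_one_eq_diagonal]
    rfl
  set fX := Matrix.toEuclideanLin X with hfX
  set fY := Matrix.toEuclideanLin Y with hfY
  have hmul : ∀ (M N : Matrix (Fin r) (Fin r) ℂ) (x : EuclideanSpace ℂ (Fin r)),
      Matrix.toEuclideanLin (M * N) x = Matrix.toEuclideanLin M (Matrix.toEuclideanLin N x) := by
    intro M N x
    apply (WithLp.equiv 2 (Fin r → ℂ)).injective
    simp [Matrix.ofLp_toEuclideanLin_apply, Matrix.mulVec_mulVec]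
  have hid : ∀ x : EuclideanSpace ℂ (Fin r),
      Matrix.toEuclideanLin (4 : Matrix (Fin r) (Fin r) ℂ) x = (4 : ℂ) • x := by
    intro x
    rw [h4m]
    apply (WithLp.equiv 2 (Fin r → ℂ)).injective
    simp [Matrix.ofLp_toEuclideanLin_apply, Matrix.smul_mulVec, Matrix.one_mulVec]
  have hadjX : Matrix.toEuclideanLin Xᴴ = LinearMap.adjoint fX :=
    Matrix.toEuclideanLin_conjTranspose_eq_adjoint X
  have hadjY : Matrix.toEuclideanLin Yᴴ = LinearMap.adjoint fY :=
    Matrix.toEuclideanLin_conjTranspose_eq_adjoint Y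
  have hcc : ∀ x, fX (fY x) = fY (fX x) := by
    intro x
    rw [hfX, hfY, ← hmul, ← hmul, hcm]
  have h4' : ∀ w w' : EuclideanSpace ℂ (Fin r),
      ⟪fX w, fX w'⟫_ℂ + ⟪fY w, fY w'⟫_ℂ = 4 * ⟪w, w'⟫_ℂ := by
    intro w w'
    rw [← LinearMap.adjoint_inner_right fX, ← LinearMap.adjoint_inner_right fY,
      ← hadjX, ← hadjY, hfX, hfY, ← hmul, ← hmul, ← inner_add_right,
      ← LinearMap.add_apply, ← _root_.map_add, h]
    rw [hid, inner_smul_right]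
  obtain ⟨v, t, s, hON, hsp, heig⟩ :=
    diagKey r (EuclideanSpace ℂ (Fin r)) finrank_euclideanSpace_fin fX fY hcc h4'
  have hspan : Submodule.span ℂ (Set.range v) = ⊤ := le_antisymm le_top hsp
  have hee : ∀ i j, ⟪v i, v j⟫_ℂ = if i = j then 1 else 0 := orthonormal_iff_ite.mp hON
  have hconjmul : ∀ c : ℂ, conj c * c = ((‖c‖ ^ 2 : ℝ) : ℂ) := fun c => by
    rw [Complex.sq_norm, Complex.normSq_eq_conj_mul_self]
  have hadjv : ∀ (f : EuclideanSpace ℂ (Fin r) →ₗ[ℂ] EuclideanSpace ℂ (Fin r))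
      (c : Fin r → ℂ), (∀ i, f (v i) = c i • v i) →
      ∀ i, LinearMap.adjoint f (v i) = conj (c i) • v i := by
    intro f c hf i
    have hz : ∀ x : EuclideanSpace ℂ (Fin r),
        ⟪LinearMap.adjoint f (v i) - conj (c i) • v i, x⟫_ℂ = 0 := by
      intro x
      have hx : x ∈ Submodule.span ℂ (Set.range v) := hspan ▸ Submodule.mem_top
      refine Submodule.span_induction
        (p := fun y _ => ⟪LinearMap.adjoint f (v i) - conj (c i) • v i, y⟫_ℂ = 0) ?_ ?_ ?_ ?_ hx
      · rintro y ⟨j, rfl⟩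
        rw [inner_sub_left, LinearMap.adjoint_inner_left, hf j, inner_smul_right,
          inner_smul_left, Complex.conj_conj, hee]
        split_ifs with hij
        · subst hij; ring
        · ring
      · simp
      · intro y z _ _ hy hz
        rw [inner_add_right, hy, hz, add_zero]
      · intro d y _ hy
        rw [inner_smul_right, hy, mul_zero]
    have h0 := hz (LinearMap.adjoint f (v i) - conj (c i) • v i)
    rw [inner_self_eq_zero] at h0
    exact sub_eq_zero.mp h0
  have hadjvX : ∀ i, LinearMap.adjoint fX (v i) = conj (t i) • v i :=
    hadjv fX t fun i => (heig i).1
  have hadjvY : ∀ i, LinearMap.adjoint fY (v i) = conj (s i) • v i :=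
    hadjv fY s fun i => (heig i).2.1
  apply (Matrix.toEuclideanLin (𝕜 := ℂ) (m := Fin r) (n := Fin r)).injective
  rw [_root_.map_add]
  refine LinearMap.ext_on hspan ?_
  rintro x ⟨i, rfl⟩
  rw [LinearMap.add_apply, hmul, hmul, hadjX, hadjY, hadjvX i, hadjvY i,
    _root_.map_smul, _root_.map_smul, ← hfX, ← hfY]
  rw [(heig i).1, (heig i).2.1, hid (v i), smul_smul, smul_smul, ← add_smul]
  have hTS : conj (t i) * t i + conj (s i) * s i = 4 := by
    rw [hconjmul, hconjmul, ← Complex.ofReal_add, (heig i).2.2]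
    norm_num
  rw [hTS]

lemma sharp_eq_conjTranspose {r : ℕ} (A : ℤ →₀ Matrix (Fin r) (Fin r) ℝ) {z : ℂ}
    (hz : ‖z‖ = 1) : mSharp A z = (mSymbol A z)ᴴ := by
  have hcz : (starRingEnd ℂ) z = z⁻¹ := by
    rw [Complex.inv_def]
    simp [Complex.normSq_eq_norm_sq, hz]
  ext i k
  simp only [mSharp, mSymbol, Matrix.transpose_apply, Matrix.conjTranspose_apply,
    Matrix.sum_apply, Matrix.smul_apply, Matrix.map_apply, smul_eq_mul]
  rw [star_sum]
  refine Finset.sum_congr rfl fun j _ => ?_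
  rw [star_mul']
  simp [Complex.star_def, hcz, Complex.conj_ofReal, map_zpow₀]


/-- If `A` satisfies the orthogonality condition on the unit circle and `A(z)`, `A(-z)`
commute there, then the alternating flip `B(z) = z A^♯(-z)` satisfies the remaining
two QMF conditions on the unit circle. -/
theorem alternating_flip_of_commute {r : ℕ}
    (A : ℤ →₀ Matrix (Fin r) (Fin r) ℝ)
    (B : ℂ → Matrix (Fin r) (Fin r) ℂ)
    (hOrth : ∀ z : ℂ, ‖z‖ = 1 →
      mSharp A z * mSymbol A z + mSharp A (-z) * mSymbol A (-z) = 4)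
    (hComm : ∀ z : ℂ, ‖z‖ = 1 →
      mSymbol A z * mSymbol A (-z) = mSymbol A (-z) * mSymbol A z)
    (hB : ∀ z : ℂ, B z = z • mSharp A (-z)) :
    ∀ z : ℂ, ‖z‖ = 1 →
      (mSharp A z * B z + mSharp A (-z) * B (-z) = 0) ∧
      ((B z⁻¹)ᵀ * B z + (B (-z)⁻¹)ᵀ * B (-z) = 4) := by
  intro z hz
  have hz0 : z ≠ 0 := by
    intro h; rw [h] at hz; simp at hz
  have hzneg : ‖-z‖ = 1 := by simpa using hz
  have hzinv : ‖z⁻¹‖ = 1 := by rw [norm_inv, hz]; norm_num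
  constructor
  · -- first identity
    rw [hB z, hB (-z), neg_neg]
    have hsc : mSharp A z * mSharp A (-z) = mSharp A (-z) * mSharp A z := by
      have h1 : (-z)⁻¹ = -z⁻¹ := by rw [inv_neg]
      have := hComm z⁻¹ hzinv
      unfold mSharp
      rw [h1, ← Matrix.transpose_mul, ← Matrix.transpose_mul, this]
    rw [Matrix.mul_smul, Matrix.mul_smul, hsc, neg_smul]
    exact add_neg_cancel _
  · -- second identity
    have hT1 : (B z⁻¹)ᵀ = z⁻¹ • mSymbol A (-z) := by
      rw [hB z⁻¹, Matrix.transpose_smul]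
      unfold mSharp
      rw [Matrix.transpose_transpose, inv_neg, inv_inv]
    have hT2 : (B (-z)⁻¹)ᵀ = (-z)⁻¹ • mSymbol A z := by
      rw [hB (-z)⁻¹, Matrix.transpose_smul]
      unfold mSharp
      rw [Matrix.transpose_transpose, inv_neg, neg_neg, inv_inv]
    rw [hT1, hT2, hB z, hB (-z), neg_neg]
    rw [Matrix.smul_mul, Matrix.mul_smul, Matrix.smul_mul, Matrix.mul_smul]
    rw [smul_smul, smul_smul, inv_mul_cancel₀ hz0, inv_mul_cancel₀ (neg_ne_zero.mpr hz0),
      one_smul, one_smul]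
    have hX : mSharp A z = (mSymbol A z)ᴴ := sharp_eq_conjTranspose A hz
    have hY : mSharp A (-z) = (mSymbol A (-z))ᴴ := sharp_eq_conjTranspose A hzneg
    have horth := hOrth z hz
    rw [hX, hY] at horth ⊢
    have := key_matrix (mSymbol A z) (mSymbol A (-z)) (hComm z hz) horth
    rw [add_comm] at this
    exact this
end

section
/- Let a_1(z), …, a_n(z), n ≥ 2, be Laurent polynomials with no common zero in ℂ\{0}. Then there exists an n×n matrix Laurent polynomial P(z) whose first row is (a_1(z), …, a_n(z)) and such that det P(z) = 1 for all z ∈ ℂ\{0}. -/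
open Matrix Finset

/-- Evaluation of the Laurent polynomial with coefficient sequence `a : ℤ →₀ ℂ`. -/
noncomputable def leval (a : ℤ →₀ ℂ) (z : ℂ) : ℂ :=
  ∑ j ∈ a.support, a j * z ^ j

/-- Evaluation of a matrix Laurent polynomial given by its coefficients. -/
noncomputable def msym {n : ℕ} (P : ℤ →₀ Matrix (Fin n) (Fin n) ℂ) (z : ℂ) :
    Matrix (Fin n) (Fin n) ℂ :=
  ∑ j ∈ P.support, z ^ j • P j

lemma gcd_mem_span {ι : Type*} [DecidableEq ι] (f : ι → Polynomial ℂ) (s : Finset ι) :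
    s.gcd f ∈ Ideal.span (f '' ↑s) := by
  induction s using Finset.induction_on with
  | empty => simp
  | @insert b s' hb ih =>
    rw [Finset.gcd_insert]
    have h1 : GCDMonoid.gcd (f b) (s'.gcd f) ∈ Ideal.span {f b, s'.gcd f} := by
      rw [← span_gcd]
      exact Ideal.subset_span rfl
    refine Ideal.span_le.mpr ?_ h1
    rintro x (rfl | rfl)
    · exact Ideal.subset_span ⟨b, by simp, rfl⟩
    · refine Ideal.span_mono ?_ ih
      exact Set.image_mono (by simp [Finset.subset_insert])

lemma row_completion_poly (m : ℕ) (b : Fin (m + 2) → Polynomial ℂ)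
    (hb : ∃ c : Fin (m + 2) → Polynomial ℂ, ∑ i, c i * b i = 1) :
    ∃ M : Matrix (Fin (m + 2)) (Fin (m + 2)) (Polynomial ℂ),
      (∀ j, M 0 j = b j) ∧ M.det = 1 := by
  induction m with
  | zero =>
    obtain ⟨c, hc⟩ := hb
    rw [Fin.sum_univ_two] at hc
    refine ⟨!![b 0, b 1; -(c 1), c 0], ?_, ?_⟩
    · intro j; fin_cases j <;> simp
    · rw [Matrix.det_fin_two_of]
      linear_combination hc
  | succ m ih =>
    obtain ⟨c, hc⟩ := hb
    set L1 : Fin (m + 2) := Fin.last (m + 1) with hL1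
    set g : Polynomial ℂ := gcd (b L1.castSucc) (b (Fin.last (m + 2))) with hg
    obtain ⟨u, v, p, q, hu, hv, hpq⟩ :
        ∃ u v p q : Polynomial ℂ, b L1.castSucc = g * u ∧ b (Fin.last (m + 2)) = g * v ∧
          p * u + q * v = 1 := by
      by_cases hg0 : g = 0
      · have h1 := (_root_.gcd_eq_zero_iff (α := Polynomial ℂ)
          (a := b L1.castSucc) (b := b (Fin.last (m + 2)))).mp hg0
        exact ⟨1, 0, 1, 0, by simp [h1.1, hg0], by simp [h1.2, hg0], by ring⟩
      · obtain ⟨u, hu⟩ := gcd_dvd_left (b L1.castSucc) (b (Fin.last (m + 2)))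
        obtain ⟨v, hv⟩ := gcd_dvd_right (b L1.castSucc) (b (Fin.last (m + 2)))
        have hcop : IsCoprime u v := by
          rw [← gcd_isUnit_iff]
          have hdvd1 : g * gcd u v ∣ b L1.castSucc := by
            rw [hu]; exact mul_dvd_mul_left g (gcd_dvd_left u v)
          have hdvd2 : g * gcd u v ∣ b (Fin.last (m + 2)) := by
            rw [hv]; exact mul_dvd_mul_left g (gcd_dvd_right u v)
          have hdvd : g * gcd u v ∣ g * 1 := by
            rw [mul_one]; exact GCDMonoid.dvd_gcd hdvd1 hdvd2
          exact isUnit_of_dvd_one ((mul_dvd_mul_iff_left hg0).mp hdvd)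
        obtain ⟨p, q, hpq⟩ := hcop
        exact ⟨u, v, p, q, hu, hv, hpq⟩
    have hne : ∀ j : Fin (m + 1), j.castSucc ≠ L1 := fun j => (Fin.castSucc_lt_last j).ne
    set b' : Fin (m + 2) → Polynomial ℂ := fun j => if j = L1 then g else b j.castSucc with hb'
    have hb'L : b' L1 = g := by simp [hb']
    have hb'c : ∀ j : Fin (m + 2), j ≠ L1 → b' j = b j.castSucc := by
      intro j hj; simp [hb', hj]
    have hbez : ∃ c' : Fin (m + 2) → Polynomial ℂ, ∑ j, c' j * b' j = 1 := by
      set c' : Fin (m + 2) → Polynomial ℂ := fun j =>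
        if j = L1 then c L1.castSucc * u + c (Fin.last (m + 2)) * v else c j.castSucc with hc'
      refine ⟨c', ?_⟩
      rw [Fin.sum_univ_castSucc]
      rw [Fin.sum_univ_castSucc, Fin.sum_univ_castSucc] at hc
      have hstep : ∀ j : Fin (m + 1), c' j.castSucc * b' j.castSucc
          = c j.castSucc.castSucc * b j.castSucc.castSucc := by
        intro j
        rw [hb'c _ (hne j)]
        simp only [hc', if_neg (hne j)]
      rw [Finset.sum_congr rfl (fun j _ => hstep j)]
      have hlast : c' (Fin.last (m + 1)) * b' (Fin.last (m + 1))
          = (c L1.castSucc * u + c (Fin.last (m + 2)) * v) * g := by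
        rw [← hL1, hb'L]
        simp only [hc', if_pos rfl]
      rw [← hL1] at hc
      rw [hu, hv] at hc
      rw [hlast]
      linear_combination hc
    obtain ⟨M', hM'row, hM'det⟩ := ih b' hbez
    set M : Matrix (Fin (m + 3)) (Fin (m + 3)) (Polynomial ℂ) :=
      fun i => Fin.lastCases
        (Fin.lastCases p (fun j' => if j' = L1 then -q else 0))
        (fun i' => Fin.lastCases (v * M' i' L1)
          (fun j' => (if j' = L1 then u else 1) * M' i' j'))
        i with hM
    have hMcc : ∀ (i' j' : Fin (m + 2)), M i'.castSucc j'.castSucc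
        = (if j' = L1 then u else 1) * M' i' j' := by
      intro i' j'; simp [hM]
    have hMcl : ∀ i' : Fin (m + 2), M i'.castSucc (Fin.last (m + 2)) = v * M' i' L1 := by
      intro i'; simp [hM]
    have hMlc : ∀ j' : Fin (m + 2), M (Fin.last (m + 2)) j'.castSucc
        = if j' = L1 then -q else 0 := by
      intro j'; simp [hM]
    have hMll : M (Fin.last (m + 2)) (Fin.last (m + 2)) = p := by simp [hM]
    refine ⟨M, ?_, ?_⟩
    · intro j
      have h0 : (0 : Fin (m + 3)) = Fin.castSucc 0 := rfl
      induction j using Fin.lastCases with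
      | last =>
        rw [h0, hMcl, hM'row, hb'L, hv]; ring
      | cast j' =>
        rw [h0, hMcc, hM'row]
        by_cases hj : j' = L1
        · rw [if_pos hj, hj, hb'L, hu]; ring
        · rw [if_neg hj, hb'c _ hj, one_mul]
    · rw [Matrix.det_succ_row M (Fin.last (m + 2))]
      have hsub : ({L1.castSucc, Fin.last (m + 2)} : Finset (Fin (m + 3))) ⊆ univ :=
        Finset.subset_univ _
      rw [← Finset.sum_subset hsub]
      · rw [Finset.sum_pair (Fin.castSucc_lt_last L1).ne]
        have hminor2 : M.submatrix (Fin.last (m + 2)).succAbove (Fin.last (m + 2)).succAbove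
            = M'.updateCol L1 (u • fun i => M' i L1) := by
          refine Matrix.ext fun i' j' => ?_
          rw [Matrix.submatrix_apply, Fin.succAbove_last, hMcc,
            Matrix.updateCol_apply]
          by_cases hj : j' = L1
          · rw [if_pos hj, if_pos hj, hj]; simp
          · rw [if_neg hj, if_neg hj, one_mul]
        have hminor1 : M.submatrix (Fin.last (m + 2)).succAbove L1.castSucc.succAbove
            = M'.updateCol L1 (v • fun i => M' i L1) := by
          refine Matrix.ext fun i' j' => ?_
          rw [Matrix.submatrix_apply, Fin.succAbove_last, Matrix.updateCol_apply]
          by_cases hj : j' = L1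
          · rw [if_pos hj, hj]
            rw [Fin.succAbove_of_le_castSucc _ _ (le_refl _), hL1, Fin.succ_last, hMcl]
            simp [hL1]
          · have hlt : j'.castSucc < L1.castSucc := by
              rw [Fin.castSucc_lt_castSucc_iff]
              exact lt_of_le_of_ne (Fin.le_last j') hj
            rw [Fin.succAbove_of_castSucc_lt _ _ hlt, hMcc, if_neg hj, one_mul, if_neg hj]
        rw [hminor1, hminor2, hMll, hMlc, if_pos rfl,
          Matrix.det_updateCol_smul, Matrix.det_updateCol_smul,
          Matrix.updateCol_eq_self, hM'det]
        have hc1 : ((Fin.last (m + 2) : Fin (m + 3)) : ℕ) = m + 2 := rfl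
        have hc2 : ((L1.castSucc : Fin (m + 3)) : ℕ) = m + 1 := rfl
        rw [hc1, hc2]
        have hodd : (-1 : Polynomial ℂ) ^ (m + 2 + (m + 1)) = -1 :=
          Odd.neg_one_pow ⟨m + 1, by ring⟩
        have heven : (-1 : Polynomial ℂ) ^ (m + 2 + (m + 2)) = 1 :=
          Even.neg_one_pow ⟨m + 2, by ring⟩
        rw [hodd, heven]
        linear_combination hpq
      · intro j _ hj
        induction j using Fin.lastCases with
        | last => exact absurd (Finset.mem_insert_of_mem (Finset.mem_singleton_self _)) hj
        | cast j' =>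
          have hj' : j' ≠ L1 := by
            rintro rfl
            exact hj (Finset.mem_insert_self _ _)
          rw [hMlc, if_neg hj', mul_zero, zero_mul]

/-- Normalization of a Laurent coefficient sequence into a polynomial. -/
lemma normalize_laurent (f : ℤ →₀ ℂ) :
    ∃ (Q : Polynomial ℂ) (k : ℤ), (∀ z : ℂ, z ≠ 0 → z ^ k * Q.eval z = leval f z) ∧
      (f ≠ 0 → Q.coeff 0 ≠ 0) := by
  by_cases hf : f = 0
  · refine ⟨0, 0, fun z hz => ?_, fun h => absurd hf h⟩
    simp [hf, leval]
  · have hne : f.support.Nonempty := Finsupp.support_nonempty_iff.mpr hf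
    set k : ℤ := f.support.min' hne with hk
    refine ⟨∑ j ∈ f.support, Polynomial.C (f j) * Polynomial.X ^ (j - k).toNat, k, ?_, ?_⟩
    · intro z hz
      rw [Polynomial.eval_finset_sum, Finset.mul_sum]
      refine Finset.sum_congr rfl fun j hj => ?_
      have hkj : k ≤ j := Finset.min'_le _ _ hj
      rw [Polynomial.eval_mul, Polynomial.eval_C, Polynomial.eval_pow, Polynomial.eval_X,
        ← zpow_natCast z ((j - k).toNat), Int.toNat_of_nonneg (by omega)]
      rw [show z ^ (k : ℤ) * (f j * z ^ (j - k)) = f j * (z ^ (k : ℤ) * z ^ (j - k)) by ring,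
        ← zpow_add₀ hz]
      congr 2
      omega
    · intro _
      rw [Polynomial.finset_sum_coeff]
      have : ∀ j ∈ f.support, (Polynomial.C (f j) * Polynomial.X ^ (j - k).toNat).coeff 0
          = if j = k then f j else 0 := by
        intro j hj
        have hkj : k ≤ j := Finset.min'_le _ _ hj
        rw [Polynomial.coeff_C_mul, Polynomial.coeff_X_pow]
        by_cases h : j = k
        · rw [if_pos h, if_pos (by omega), mul_one]
        · rw [if_neg h, if_neg (by omega), mul_zero]
      rw [Finset.sum_congr rfl this, Finset.sum_ite_eq' f.support k (fun j => f j),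
        if_pos (Finset.min'_mem _ hne)]
      exact Finsupp.mem_support_iff.mp (Finset.min'_mem _ hne)

/-- Shifting a polynomial's coefficients by `d` as a Laurent coefficient sequence. -/
noncomputable def shiftF (p : Polynomial ℂ) (d : ℤ) : ℤ →₀ ℂ :=
  Finsupp.embDomain ⟨fun t : ℕ => (t : ℤ) + d, fun x y h => by simpa using h⟩ p.toFinsupp.coeff

lemma leval_shiftF (p : Polynomial ℂ) (d : ℤ) (z : ℂ) (hz : z ≠ 0) :
    leval (shiftF p d) z = z ^ d * p.eval z := by
  unfold leval shiftF
  rw [Finsupp.support_embDomain, Finset.sum_map, Polynomial.support_toFinsupp, Polynomial.eval_eq_sum, Polynomial.sum_def,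
    Finset.mul_sum]
  refine Finset.sum_congr rfl fun t ht => ?_
  rw [Finsupp.embDomain_apply_self]
  show p.toFinsupp.coeff t * z ^ ((t : ℤ) + d) = _
  rw [zpow_add₀ hz, zpow_natCast, Polynomial.toFinsupp_apply]
  ring

lemma prod_zpow_eq {α : Type*} (z : ℂ) (hz : z ≠ 0) (s : Finset α) (K : α → ℤ) :
    ∏ j ∈ s, z ^ K j = z ^ (∑ j ∈ s, K j) := by
  induction s using Finset.cons_induction with
  | empty => simp
  | cons a s ha ih => rw [Finset.prod_cons, Finset.sum_cons, ih, zpow_add₀ hz]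

/-- Completion: Laurent polynomials `a₁, …, aₙ` (`n ≥ 2`) with no common zero in
`ℂ \ {0}` form the first row of an `n×n` matrix Laurent polynomial of determinant 1. -/
theorem laurent_row_completion {n : ℕ} (hn : 2 ≤ n) (a : Fin n → (ℤ →₀ ℂ))
    (hcz : ∀ z : ℂ, z ≠ 0 → ∃ i : Fin n, leval (a i) z ≠ 0) :
    ∃ P : ℤ →₀ Matrix (Fin n) (Fin n) ℂ, ∀ z : ℂ, z ≠ 0 →
      (∀ i : Fin n, msym P z ⟨0, by omega⟩ i = leval (a i) z) ∧
      (msym P z).det = 1 := by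
  classical
  obtain ⟨m, rfl⟩ : ∃ m, n = m + 2 := ⟨n - 2, by omega⟩
  choose A K hEval hCoeff using fun i => normalize_laurent (a i)
  obtain ⟨i₀, hi₀⟩ := hcz 1 one_ne_zero
  have ha₀ : a i₀ ≠ 0 := by
    rintro h
    apply hi₀
    simp [h, leval]
  have hA₀ : A i₀ ≠ 0 := fun h => hCoeff i₀ ha₀ (by rw [h]; simp)
  have hgu : IsUnit (Finset.univ.gcd A) := by
    by_contra hgnu
    have hg0 : Finset.univ.gcd A ≠ 0 := by
      intro h0
      exact hA₀ (Finset.gcd_eq_zero_iff.mp h0 i₀ (Finset.mem_univ _))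
    obtain ⟨z₀, hz₀⟩ := Complex.exists_root (Polynomial.degree_pos_of_ne_zero_of_nonunit hg0 hgnu)
    have hdvd : ∀ i, (Finset.univ.gcd A) ∣ A i := fun i => Finset.gcd_dvd (Finset.mem_univ i)
    have hz0ne : z₀ ≠ 0 := by
      rintro rfl
      obtain ⟨w, hw⟩ := hdvd i₀
      apply hCoeff i₀ ha₀
      rw [hw, Polynomial.mul_coeff_zero, Polynomial.coeff_zero_eq_eval_zero, hz₀, zero_mul]
    obtain ⟨i, hi⟩ := hcz z₀ hz0ne
    apply hi
    rw [← hEval i z₀ hz0ne]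
    obtain ⟨w, hw⟩ := hdvd i
    rw [hw, Polynomial.eval_mul, show Polynomial.eval z₀ (Finset.univ.gcd A) = 0 from hz₀]
    ring
  obtain ⟨c, hc⟩ : ∃ c : Fin (m + 2) → Polynomial ℂ, ∑ i, c i * A i = 1 := by
    have hmem : Finset.univ.gcd A ∈ Ideal.span (A '' ↑(Finset.univ : Finset (Fin (m + 2)))) :=
      gcd_mem_span A Finset.univ
    rw [Finset.coe_univ, Set.image_univ] at hmem
    have htop : Ideal.span (Set.range A) = ⊤ := Ideal.eq_top_of_isUnit_mem _ hmem hgu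
    have h1 : (1 : Polynomial ℂ) ∈ Ideal.span (Set.range A) := htop ▸ Submodule.mem_top
    exact Ideal.mem_span_range_iff_exists_fun.mp h1
  obtain ⟨M, hMrow, hMdet⟩ := row_completion_poly m A ⟨c, hc⟩
  set Ksum : ℤ := ∑ j, K j with hKsum
  set e : Fin (m + 2) → Fin (m + 2) → ℤ :=
    fun i j => K j + (if i = 1 then -Ksum else 0) with he
  set ent : Fin (m + 2) → Fin (m + 2) → (ℤ →₀ ℂ) :=
    fun i j => shiftF (M i j) (e i j) with hent
  set S : Finset ℤ :=
    Finset.univ.biUnion (fun ij : Fin (m + 2) × Fin (m + 2) => (ent ij.1 ij.2).support) with hS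
  have hSsub : ∀ i j, (ent i j).support ⊆ S := by
    intro i j
    rw [hS]
    exact Finset.subset_biUnion_of_mem
      (fun ij : Fin (m + 2) × Fin (m + 2) => (ent ij.1 ij.2).support) (Finset.mem_univ (i, j))
  refine ⟨Finsupp.onFinset S (fun t => Matrix.of fun i j => ent i j t) ?_, ?_⟩
  · intro t ht
    by_contra hts
    apply ht
    ext i j
    have h1 : t ∉ (ent i j).support := fun hm => hts (hSsub i j hm)
    simpa using Finsupp.notMem_support_iff.mp h1
  set P : ℤ →₀ Matrix (Fin (m + 2)) (Fin (m + 2)) ℂ :=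
    Finsupp.onFinset S (fun t => Matrix.of fun i j => ent i j t) _ with hP
  have hPapp : ∀ t, P t = Matrix.of fun i j => ent i j t := fun t => rfl
  have hkey : ∀ (z : ℂ) (i j : Fin (m + 2)), (msym P z) i j = leval (ent i j) z := by
    intro z i j
    unfold msym
    rw [Matrix.sum_apply]
    have h1 : ∀ t, (z ^ t • P t) i j = ent i j t * z ^ t := by
      intro t
      rw [Matrix.smul_apply, hPapp]
      simp only [Matrix.of_apply, smul_eq_mul]
      ring
    rw [Finset.sum_congr rfl (fun t _ => h1 t)]
    have h2 : ∑ t ∈ P.support, ent i j t * z ^ t = ∑ t ∈ S, ent i j t * z ^ t := by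
      refine Finset.sum_subset Finsupp.support_onFinset_subset fun t _ htP => ?_
      have : P t = 0 := Finsupp.notMem_support_iff.mp htP
      rw [hPapp] at this
      have h3 : ent i j t = 0 := by
        have := congrFun (congrFun this i) j
        simpa using this
      rw [h3, zero_mul]
    have h4 : leval (ent i j) z = ∑ t ∈ S, ent i j t * z ^ t := by
      unfold leval
      refine Finset.sum_subset (hSsub i j) fun t _ htP => ?_
      rw [Finsupp.notMem_support_iff.mp htP, zero_mul]
    rw [h2, ← h4]
  have h00 : (⟨0, by omega⟩ : Fin (m + 2)) = (0 : Fin (m + 2)) := by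
    apply Fin.ext
    simp
  have h01 : (0 : Fin (m + 2)) ≠ 1 := by
    simp [Fin.ext_iff]
  intro z hz
  have hlev : ∀ i j, leval (ent i j) z = z ^ e i j * (M i j).eval z := by
    intro i j
    rw [hent]
    exact leval_shiftF (M i j) (e i j) z hz
  constructor
  · intro i
    rw [h00, hkey z 0 i, hlev 0 i, hMrow i]
    have : e 0 i = K i := by
      simp only [he, if_neg h01, add_zero]
    rw [this]
    exact hEval i z hz
  · have hform : msym P z = Matrix.diagonal (fun i => if i = 1 then z ^ (-Ksum) else 1)
        * (M.map (Polynomial.evalRingHom z)) * Matrix.diagonal (fun j => z ^ K j) := by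
      refine Matrix.ext fun i j => ?_
      rw [hkey z i j, hlev i j, Matrix.mul_diagonal, Matrix.diagonal_mul, Matrix.map_apply]
      simp only [he, Polynomial.coe_evalRingHom]
      rw [zpow_add₀ hz]
      by_cases hi1 : i = 1
      · rw [if_pos hi1, if_pos hi1]; ring
      · rw [if_neg hi1, if_neg hi1, zpow_zero]; ring
    have hdet3 : (M.map (Polynomial.evalRingHom z)).det = 1 := by
      have h5 := (RingHom.map_det (Polynomial.evalRingHom z) M).symm
      rw [RingHom.mapMatrix_apply] at h5
      rw [h5, hMdet, _root_.map_one]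
    rw [hform, Matrix.det_mul, Matrix.det_mul, Matrix.det_diagonal, Matrix.det_diagonal, hdet3]
    have hprod1 : ∏ i : Fin (m + 2), (if i = 1 then z ^ (-Ksum) else (1 : ℂ)) = z ^ (-Ksum) := by
      rw [Finset.prod_ite_eq' Finset.univ (1 : Fin (m + 2)) (fun _ => z ^ (-Ksum))]
      simp
    have hprod2 : ∏ j : Fin (m + 2), z ^ K j = z ^ Ksum := prod_zpow_eq z hz _ K
    rw [hprod1, hprod2, mul_one, ← zpow_add₀ hz]
    simp
end

section
/- Let A_0(z), A_1(z) be r×r matrix Laurent polynomials with A_0^♯(z)A_0(z) + A_1^♯(z)A_1(z) = 2I on the unit circle. Suppose D_0(z), D_1(z) are r×r matrix Laurent polynomials such that the 2r×2r matrix G(z) = [[A_0(z), D_0^♯(z)], [A_1(z), D_1^♯(z)]] satisfies A_0^♯(z)D_0^♯(z) + A_1^♯(z)D_1^♯(z) = 0, and let K(z) be a spectral factor, i.e. D(z) := 2(D_0(z)D_0^♯(z) + D_1(z)D_1^♯(z)) = K(z)K^♯(z) with K(z) invertible on the unit circle. Then B_0(z) := 2 D_0^♯(z)(K^♯(z))^{−1}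 and B_1(z) := 2 D_1^♯(z)(K^♯(z))^{−1} satisfy A_0^♯(z)B_0(z) + A_1^♯(z)B_1(z) = 0 and B_0^♯(z)B_0(z) + B_1^♯(z)B_1(z) = 2I on the unit circle. -/
open Matrix Finset MeasureTheory

/-- Construction of the wavelet subsymbols: if `A_0^♯ A_0 + A_1^♯ A_1 = 2I`,
`A_0^♯ D_0^♯ + A_1^♯ D_1^♯ = 0` and `K` is a spectral factor of
`D = 2(D_0 D_0^♯ + D_1 D_1^♯)`, then `B_i = 2 D_i^♯ (K^♯)⁻¹` satisfy the last two
QMF equations on the unit circle. -/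
theorem wavelet_subsymbols_construction {r : ℕ}
    (A0 A1 D0 D1 : ℤ →₀ Matrix (Fin r) (Fin r) ℝ)
    (K B0 B1 : ℂ → Matrix (Fin r) (Fin r) ℂ)
    (hQMF : ∀ z : ℂ, ‖z‖ = 1 →
      mSharp A0 z * mSymbol A0 z + mSharp A1 z * mSymbol A1 z = 2)
    (hOrth : ∀ z : ℂ, ‖z‖ = 1 →
      mSharp A0 z * mSharp D0 z + mSharp A1 z * mSharp D1 z = 0)
    (hKunit : ∀ z : ℂ, ‖z‖ = 1 → IsUnit (K z))
    (hSpec : ∀ z : ℂ, ‖z‖ = 1 →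
      (2 : ℂ) • (mSymbol D0 z * mSharp D0 z + mSymbol D1 z * mSharp D1 z)
        = K z * (K z⁻¹)ᵀ)
    (hB0 : ∀ z : ℂ, B0 z = (2 : ℂ) • (mSharp D0 z * ((K z⁻¹)ᵀ)⁻¹))
    (hB1 : ∀ z : ℂ, B1 z = (2 : ℂ) • (mSharp D1 z * ((K z⁻¹)ᵀ)⁻¹)) :
    ∀ z : ℂ, ‖z‖ = 1 →
      (mSharp A0 z * B0 z + mSharp A1 z * B1 z = 0) ∧
      ((B0 z⁻¹)ᵀ * B0 z + (B1 z⁻¹)ᵀ * B1 z = 2) := by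
  intro z hz
  have hz0 : z ≠ 0 := by
    intro h; rw [h] at hz; simp at hz
  have hzi : ‖z⁻¹‖ = 1 := by rw [norm_inv, hz]; norm_num
  have hzz : (z⁻¹)⁻¹ = z := inv_inv z
  have hKd : IsUnit (K z).det := (Matrix.isUnit_iff_isUnit_det _).mp (hKunit z hz)
  have hKd' : IsUnit ((K z⁻¹)ᵀ).det := by
    rw [Matrix.det_transpose]
    exact (Matrix.isUnit_iff_isUnit_det _).mp (hKunit z⁻¹ hzi)
  constructor
  · rw [hB0, hB1, mul_smul_comm, mul_smul_comm, ← smul_add, ← mul_assoc, ← mul_assoc,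
      ← add_mul, hOrth z hz, zero_mul, smul_zero]
  · have hB0T : (B0 z⁻¹)ᵀ = (2 : ℂ) • ((K z)⁻¹ * mSymbol D0 z) := by
      rw [hB0 z⁻¹, hzz, Matrix.transpose_smul, Matrix.transpose_mul, mSharp,
        Matrix.transpose_transpose, hzz, ← Matrix.transpose_nonsing_inv,
        Matrix.transpose_transpose]
    have hB1T : (B1 z⁻¹)ᵀ = (2 : ℂ) • ((K z)⁻¹ * mSymbol D1 z) := by
      rw [hB1 z⁻¹, hzz, Matrix.transpose_smul, Matrix.transpose_mul, mSharp,
        Matrix.transpose_transpose, hzz, ← Matrix.transpose_nonsing_inv,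
        Matrix.transpose_transpose]
    rw [hB0T, hB1T, hB0, hB1, smul_mul_assoc, smul_mul_assoc, mul_smul_comm, mul_smul_comm,
      smul_smul, smul_smul, ← smul_add]
    have key : (K z)⁻¹ * mSymbol D0 z * (mSharp D0 z * ((K z⁻¹)ᵀ)⁻¹)
        + (K z)⁻¹ * mSymbol D1 z * (mSharp D1 z * ((K z⁻¹)ᵀ)⁻¹)
        = (K z)⁻¹ * ((mSymbol D0 z * mSharp D0 z + mSymbol D1 z * mSharp D1 z)
            * ((K z⁻¹)ᵀ)⁻¹) := by
      noncomm_ring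
    rw [key]
    have step : ((2:ℂ) * 2) • ((K z)⁻¹ * ((mSymbol D0 z * mSharp D0 z
          + mSymbol D1 z * mSharp D1 z) * ((K z⁻¹)ᵀ)⁻¹))
        = (2:ℂ) • ((K z)⁻¹ * (((2:ℂ) • (mSymbol D0 z * mSharp D0 z
          + mSymbol D1 z * mSharp D1 z)) * ((K z⁻¹)ᵀ)⁻¹)) := by
      simp only [smul_mul_assoc, mul_smul_comm, smul_smul]
    rw [step, hSpec z hz, mul_assoc (K z), Matrix.mul_nonsing_inv _ hKd', mul_one,
      Matrix.nonsing_inv_mul _ hKd, two_smul, one_add_one_eq_two]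
end

section
/- Let F ∈ L²(ℝ, ℝ^{r×r}) be a matrix function with orthonormal integer translates, i.e., ∫ F(x)^T F(x+k) dx = δ_{k0} I for all k ∈ ℤ, satisfying the refinement equation F = Σ_j F(2·−j) A_j for a finitely supported matrix mask A. Then the symbol satisfies A^♯(z)A(z) + A^♯(−z)A(−z) = 4I for all z on the unit circle. -/
open Matrix Finset MeasureTheory

section Helpers
variable {r : ℕ}

lemma QMFaux.memLp_comp_affine {f : ℝ → ℝ} (hf : MemLp f 2 volume) (a b : ℝ) (ha : a ≠ 0) :
    MemLp (fun x => f (a * x + b)) 2 volume := by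
  have hmap : Measure.map (fun x : ℝ => a * x + b) volume
      = ENNReal.ofReal |a⁻¹| • volume := by
    have h1 : (fun x : ℝ => a * x + b) = (fun x : ℝ => x + b) ∘ (fun x : ℝ => a * x) := rfl
    rw [h1, ← Measure.map_map (measurable_add_const b) (measurable_const_mul a),
      Real.map_volume_mul_left ha, Measure.map_smul,
      map_add_right_eq_self volume b]
  have hsm : MemLp f 2 (Measure.map (fun x : ℝ => a * x + b) volume) := by
    rw [hmap]; exact hf.smul_measure (by simp)
  exact (memLp_map_measure_iff (hsm.1) (by fun_prop)).mp hsm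

lemma QMFaux.integrable_mul_L2 {f g : ℝ → ℝ} (hf : MemLp f 2 volume)
    (hg : MemLp g 2 volume) : Integrable (fun x => f x * g x) volume := by
  rw [← memLp_one_iff_integrable]
  have hT : ENNReal.HolderTriple 2 2 1 := ⟨?_⟩
  · have h := hg.smul hf (p := 2) (q := 2) (r := 1)
    exact h
  · rw [ENNReal.inv_two_add_inv_two, inv_one]

lemma QMFaux.integral_comp_two_sub (h : ℝ → ℝ) (m : ℝ) :
    ∫ x : ℝ, h (2 * x - m) = 2⁻¹ * ∫ y : ℝ, h y := by
  rw [show (fun x : ℝ => h (2 * x - m)) = fun x : ℝ => (fun y => h (y - m)) (2 * x) from rfl,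
    Measure.integral_comp_mul_left (fun y => h (y - m)) 2,
    integral_sub_right_eq_self h m]
  norm_num

lemma QMFaux.key_orthogonality
    (F : ℝ → Matrix (Fin r) (Fin r) ℝ)
    (A : ℤ →₀ Matrix (Fin r) (Fin r) ℝ)
    (hL2 : ∀ i j : Fin r, MemLp (fun x => F x i j) 2 volume)
    (hOrth : ∀ k : ℤ, ∀ i j : Fin r,
      (∫ x : ℝ, ((F x)ᵀ * F (x + (k : ℝ))) i j) =
        (if k = 0 then (1 : Matrix (Fin r) (Fin r) ℝ) else 0) i j)
    (hRef : ∀ x : ℝ, F x = ∑ m ∈ A.support, F (2 * x - (m : ℝ)) * A m)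
    (k : ℤ) :
    ∑ m ∈ A.support, (A m)ᵀ * A (m + 2 * k) =
      if k = 0 then (2 : ℝ) • (1 : Matrix (Fin r) (Fin r) ℝ) else 0 := by
  -- square-integrability of the scaled translates
  have hF2 : ∀ (b : ℝ) (p t : Fin r), MemLp (fun x => F (2 * x + b) p t) 2 volume :=
    fun b p t => QMFaux.memLp_comp_affine (hL2 p t) 2 b two_ne_zero
  have hF2' : ∀ (m : ℤ) (p t : Fin r),
      MemLp (fun x => F (2 * x - (m : ℝ)) p t) 2 volume := by
    intro m p t
    have := hF2 (-(m : ℝ)) p t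
    simpa [sub_eq_add_neg] using this
  have hF2'' : ∀ (n : ℤ) (p s : Fin r),
      MemLp (fun x => F (2 * (x + (k : ℝ)) - (n : ℝ)) p s) 2 volume := by
    intro n p s
    have he : (fun x : ℝ => F (2 * (x + (k : ℝ)) - (n : ℝ)) p s)
        = fun x : ℝ => F (2 * x + (2 * (k : ℝ) - n)) p s := by
      funext x; congr 1; ring
    rw [he]; exact hF2 _ p s
  -- integrability of the products
  have hInt : ∀ (m n : ℤ) (t s : Fin r),
      Integrable (fun x : ℝ =>
        ∑ p, F (2 * x - (m : ℝ)) p t * F (2 * (x + (k : ℝ)) - (n : ℝ)) p s) volume := by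
    intro m n t s
    exact integrable_finset_sum _ fun p _ => QMFaux.integrable_mul_L2 (hF2' m p t) (hF2'' n p s)
  -- the matrix-valued integrand identity
  have hIdent : ∀ x : ℝ, (F x)ᵀ * F (x + (k : ℝ)) =
      ∑ m ∈ A.support, ∑ n ∈ A.support,
        (A m)ᵀ * ((F (2 * x - (m : ℝ)))ᵀ * (F (2 * (x + (k : ℝ)) - (n : ℝ)) * A n)) := by
    intro x
    rw [hRef x, hRef (x + (k : ℝ))]
    simp only [transpose_sum, transpose_mul, Finset.sum_mul, Finset.mul_sum, Matrix.mul_assoc]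
    exact Finset.sum_comm
  -- the entrywise expansion of each term
  have hentry : ∀ (m n : ℤ) (x : ℝ) (i j : Fin r),
      ((A m)ᵀ * ((F (2 * x - (m : ℝ)))ᵀ * (F (2 * (x + (k : ℝ)) - (n : ℝ)) * A n))) i j
        = ∑ t, ∑ s, (A m t i * A n s j) *
            (∑ p, F (2 * x - (m : ℝ)) p t * F (2 * (x + (k : ℝ)) - (n : ℝ)) p s) := by
    intro m n x i j
    simp only [mul_apply, transpose_apply, Finset.mul_sum, Finset.sum_mul]
    refine Finset.sum_congr rfl fun t _ => ?_
    rw [Finset.sum_comm]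
    exact Finset.sum_congr rfl fun s _ => Finset.sum_congr rfl fun p _ => by ring
  -- value of the elementary integrals
  have hPint : ∀ (m n : ℤ) (t s : Fin r),
      (∫ x : ℝ, ∑ p, F (2 * x - (m : ℝ)) p t * F (2 * (x + (k : ℝ)) - (n : ℝ)) p s)
        = 2⁻¹ * ((if (m + 2 * k - n : ℤ) = 0 then (1 : Matrix (Fin r) (Fin r) ℝ) else 0) t s) := by
    intro m n t s
    have harg : ∀ x : ℝ,
        (∑ p, F (2 * x - (m : ℝ)) p t * F (2 * (x + (k : ℝ)) - (n : ℝ)) p s)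
          = (fun y => ((F y)ᵀ * F (y + ((m + 2 * k - n : ℤ) : ℝ))) t s) (2 * x - (m : ℝ)) := by
      intro x
      have h2 : (2 * x - (m : ℝ)) + ((m + 2 * k - n : ℤ) : ℝ) = 2 * (x + (k : ℝ)) - n := by
        push_cast; ring
      simp only [mul_apply, transpose_apply, h2]
    simp_rw [harg]
    rw [QMFaux.integral_comp_two_sub (fun y => ((F y)ᵀ * F (y + ((m + 2 * k - n : ℤ) : ℝ))) t s) (m : ℝ),
      hOrth (m + 2 * k - n) t s]
  ext i j
  have h0 := hOrth k i j
  -- rewrite the integral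
  have h1 : (∫ x : ℝ, ((F x)ᵀ * F (x + (k : ℝ))) i j)
      = ∑ m ∈ A.support, ∑ n ∈ A.support, ∑ t, ∑ s, (A m t i * A n s j) *
          (2⁻¹ * ((if (m + 2 * k - n : ℤ) = 0 then (1 : Matrix (Fin r) (Fin r) ℝ) else 0) t s)) := by
    have hInteg : ∀ m n : ℤ, Integrable (fun x : ℝ =>
        ∑ t, ∑ s, (A m t i * A n s j) *
          (∑ p, F (2 * x - (m : ℝ)) p t * F (2 * (x + (k : ℝ)) - (n : ℝ)) p s)) volume := by
      intro m n
      refine integrable_finset_sum _ fun t _ => integrable_finset_sum _ fun s _ => ?_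
      exact (hInt m n t s).const_mul _
    calc (∫ x : ℝ, ((F x)ᵀ * F (x + (k : ℝ))) i j)
        = ∫ x : ℝ, ∑ m ∈ A.support, ∑ n ∈ A.support, ∑ t, ∑ s, (A m t i * A n s j) *
            (∑ p, F (2 * x - (m : ℝ)) p t * F (2 * (x + (k : ℝ)) - (n : ℝ)) p s) := by
          congr 1; funext x
          rw [show ((F x)ᵀ * F (x + (k : ℝ))) i j
            = (∑ m ∈ A.support, ∑ n ∈ A.support,
              (A m)ᵀ * ((F (2 * x - (m : ℝ)))ᵀ * (F (2 * (x + (k : ℝ)) - (n : ℝ)) * A n))) i j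
            from by rw [← hIdent x]]
          simp only [Matrix.sum_apply]
          exact Finset.sum_congr rfl fun m _ => Finset.sum_congr rfl fun n _ => hentry m n x i j
      _ = ∑ m ∈ A.support, ∑ n ∈ A.support, ∫ x : ℝ, ∑ t, ∑ s, (A m t i * A n s j) *
            (∑ p, F (2 * x - (m : ℝ)) p t * F (2 * (x + (k : ℝ)) - (n : ℝ)) p s) := by
          rw [integral_finset_sum _ fun m _ => integrable_finset_sum _ fun n _ => hInteg m n]
          exact Finset.sum_congr rfl fun m _ => integral_finset_sum _ fun n _ => hInteg m n
      _ = ∑ m ∈ A.support, ∑ n ∈ A.support, ∑ t, ∑ s, (A m t i * A n s j) *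
            (2⁻¹ * ((if (m + 2 * k - n : ℤ) = 0 then (1 : Matrix (Fin r) (Fin r) ℝ) else 0) t s)) := by
          refine Finset.sum_congr rfl fun m _ => Finset.sum_congr rfl fun n _ => ?_
          rw [integral_finset_sum _ fun t _ => integrable_finset_sum _ fun s _ =>
            (hInt m n t s).const_mul _]
          refine Finset.sum_congr rfl fun t _ => ?_
          rw [integral_finset_sum _ fun s _ => (hInt m n t s).const_mul _]
          refine Finset.sum_congr rfl fun s _ => ?_
          rw [integral_const_mul, hPint m n t s]
  -- collapse the inner sums
  have h2 : ∀ m : ℤ, (∑ n ∈ A.support, ∑ t, ∑ s, (A m t i * A n s j) *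
        (2⁻¹ * ((if (m + 2 * k - n : ℤ) = 0 then (1 : Matrix (Fin r) (Fin r) ℝ) else 0) t s)))
      = 2⁻¹ * ((A m)ᵀ * A (m + 2 * k)) i j := by
    intro m
    have hval : ∀ n : ℤ, (∑ t, ∑ s, (A m t i * A n s j) *
        (2⁻¹ * ((if (m + 2 * k - n : ℤ) = 0 then (1 : Matrix (Fin r) (Fin r) ℝ) else 0) t s)))
        = if n = m + 2 * k then 2⁻¹ * (∑ t, A m t i * A n t j) else 0 := by
      intro n
      by_cases hn : n = m + 2 * k
      · subst hn
        simp only [add_sub_cancel_right, sub_self]  -- m + 2k - (m+2k) = 0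
        simp [Matrix.one_apply, mul_ite, Finset.mul_sum, Finset.sum_mul, mul_comm, mul_assoc,
          Finset.sum_ite_eq' , mul_left_comm]
      · have : (m + 2 * k - n : ℤ) ≠ 0 := by omega
        simp [this, hn]
    rw [Finset.sum_congr rfl fun n _ => hval n, Finset.sum_ite_eq' A.support (m + 2 * k)]
    by_cases hmem : m + 2 * k ∈ A.support
    · simp only [hmem, if_true]
      rw [mul_apply]
      simp [transpose_apply]
    · have hz : A (m + 2 * k) = 0 := Finsupp.notMem_support_iff.mp hmem
      simp [hmem, hz]
  rw [h1] at h0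
  rw [Finset.sum_congr rfl fun m _ => h2 m, ← Finset.mul_sum] at h0
  -- h0 : 2⁻¹ * ∑ ... = (if k = 0 then 1 else 0) i j
  have h3 : (∑ m ∈ A.support, ((A m)ᵀ * A (m + 2 * k)) i j)
      = 2 * ((if k = 0 then (1 : Matrix (Fin r) (Fin r) ℝ) else 0) i j) := by
    rw [← h0]; ring
  rw [Matrix.sum_apply]
  rw [h3]
  by_cases hk : k = 0 <;> simp [hk, Matrix.smul_apply]

end Helpers

lemma QMFaux.prod_expand {r : ℕ} (A : ℤ →₀ Matrix (Fin r) (Fin r) ℝ) (w : ℂ) (hw : w ≠ 0) :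
    mSharp A w * mSymbol A w = ∑ m ∈ A.support, ∑ n ∈ A.support,
      w ^ (n - m) • (((A m).map Complex.ofReal)ᵀ * (A n).map Complex.ofReal) := by
  rw [mSharp, mSymbol, mSymbol, transpose_sum, Finset.sum_mul]
  refine Finset.sum_congr rfl fun m _ => ?_
  rw [Finset.mul_sum]
  refine Finset.sum_congr rfl fun n _ => ?_
  rw [transpose_smul, smul_mul_smul_comm]
  congr 1
  rw [_root_.inv_zpow, ← _root_.zpow_neg, ← zpow_add₀ hw, neg_add_eq_sub]


/-- If a refinable square-integrable matrix function has orthonormal integer translates,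
then its mask symbol satisfies the first QMF condition on the unit circle. -/
theorem orthonormal_refinable_implies_QMF {r : ℕ}
    (F : ℝ → Matrix (Fin r) (Fin r) ℝ)
    (A : ℤ →₀ Matrix (Fin r) (Fin r) ℝ)
    (hL2 : ∀ i j : Fin r, MemLp (fun x => F x i j) 2 volume)
    (hOrth : ∀ k : ℤ, ∀ i j : Fin r,
      (∫ x : ℝ, ((F x)ᵀ * F (x + (k : ℝ))) i j) =
        (if k = 0 then (1 : Matrix (Fin r) (Fin r) ℝ) else 0) i j)
    (hRef : ∀ x : ℝ, F x = ∑ m ∈ A.support, F (2 * x - (m : ℝ)) * A m) :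
    ∀ z : ℂ, ‖z‖ = 1 →
      mSharp A z * mSymbol A z + mSharp A (-z) * mSymbol A (-z) = 4 := by
  intro z hz
  have hz0 : z ≠ 0 := by
    intro h; rw [h] at hz; simp at hz
  rcases Nat.eq_zero_or_pos r with hr | hr
  · subst hr; ext i j; exact i.elim0
  have Kreal := QMFaux.key_orthogonality F A hL2 hOrth hRef
  set B : ℤ → Matrix (Fin r) (Fin r) ℂ := fun m => (A m).map Complex.ofReal with hB
  set c : ℤ → ℂ := fun d => z ^ d + (-z) ^ d with hc
  set D : Finset ℤ := (A.support ×ˢ A.support).image (fun p => p.2 - p.1) with hD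
  -- the complex-matrix version of the key identity
  have KC : ∀ d : ℤ, c d • (∑ m ∈ A.support, (B m)ᵀ * B (m + d))
      = if d = 0 then (4 : Matrix (Fin r) (Fin r) ℂ) else 0 := by
    intro d
    rcases Int.even_or_odd d with hev | hod
    · obtain ⟨kk, hkk⟩ := hev
      have hd2 : d = 2 * kk := by omega
      have hmap : (∑ m ∈ A.support, (B m)ᵀ * B (m + d))
          = (∑ m ∈ A.support, (A m)ᵀ * A (m + 2 * kk)).map Complex.ofReal := by
        rw [← hd2]
        ext i j
        simp only [Matrix.sum_apply, Matrix.map_apply, mul_apply, transpose_apply, hB]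
        push_cast
        rfl
      rw [hmap, Kreal kk]
      by_cases hk0 : kk = 0
      · subst hk0
        have hd0 : d = 0 := by omega
        subst hd0
        have hc0 : c 0 = 2 := by simp [hc]; norm_num
        rw [if_pos rfl, if_pos rfl, hc0]
        have hone : ((2:ℝ) • (1 : Matrix (Fin r) (Fin r) ℝ)).map Complex.ofReal
            = (2:ℂ) • (1 : Matrix (Fin r) (Fin r) ℂ) := by
          ext i j
          simp [Matrix.map_apply, Matrix.one_apply, apply_ite]
        rw [hone, smul_smul]
        have h4 : (4 : Matrix (Fin r) (Fin r) ℂ) = ((4:ℕ) : Matrix (Fin r) (Fin r) ℂ) := by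
          norm_num
        rw [h4, ← Matrix.diagonal_natCast]
        ext i j
        by_cases hij : i = j <;>
          simp [Matrix.diagonal_apply, Matrix.one_apply, hij] <;> norm_num
      · have hd0 : d ≠ 0 := by omega
        rw [if_neg hk0, if_neg hd0]
        simp
    · have : c d = 0 := by
        simp only [hc, hod.neg_zpow]
        ring
      rw [this, zero_smul]
      have hd0 : d ≠ 0 := by
        rintro rfl
        exact (Int.not_odd_iff_even.mpr Even.zero) hod
      rw [if_neg hd0]
  -- reindex the double sum along diagonals
  have R1 : ∀ m ∈ A.support,
      (∑ n ∈ A.support, c (n - m) • ((B m)ᵀ * B n))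
        = ∑ d ∈ D, c d • ((B m)ᵀ * B (m + d)) := by
    intro m hm
    have himg : (∑ n ∈ A.support, c (n - m) • ((B m)ᵀ * B n))
        = ∑ d ∈ A.support.image (fun n => n - m), c d • ((B m)ᵀ * B (m + d)) := by
      rw [Finset.sum_image (fun n _ n' _ h => by omega)]
      refine Finset.sum_congr rfl fun n _ => ?_
      rw [add_sub_cancel]
    rw [himg]
    refine Finset.sum_subset ?_ ?_
    · intro d hd
      obtain ⟨n, hn, rfl⟩ := Finset.mem_image.mp hd
      exact Finset.mem_image.mpr ⟨(m, n), Finset.mem_product.mpr ⟨hm, hn⟩, rfl⟩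
    · intro d _ hnd
      have hmd : m + d ∉ A.support := by
        intro hmem
        exact hnd (Finset.mem_image.mpr ⟨m + d, hmem, by ring⟩)
      have : A (m + d) = 0 := Finsupp.notMem_support_iff.mp hmd
      simp [hB, this]
  -- put things together
  rw [QMFaux.prod_expand A z hz0, QMFaux.prod_expand A (-z) (neg_ne_zero.mpr hz0),
    ← Finset.sum_add_distrib]
  have : ∀ m ∈ A.support,
      ((∑ n ∈ A.support, z ^ (n - m) • ((B m)ᵀ * B n))
        + ∑ n ∈ A.support, (-z) ^ (n - m) • ((B m)ᵀ * B n))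
      = ∑ n ∈ A.support, c (n - m) • ((B m)ᵀ * B n) := by
    intro m _
    rw [← Finset.sum_add_distrib]
    exact Finset.sum_congr rfl fun n _ => (add_smul _ _ _).symm
  rw [Finset.sum_congr rfl this, Finset.sum_congr rfl R1, Finset.sum_comm]
  have hswap : ∀ d ∈ D, (∑ m ∈ A.support, c d • ((B m)ᵀ * B (m + d)))
      = if d = 0 then (4 : Matrix (Fin r) (Fin r) ℂ) else 0 := by
    intro d _
    rw [← Finset.smul_sum]
    exact KC d
  rw [Finset.sum_congr rfl hswap, Finset.sum_ite_eq' D 0 (fun _ => (4 : Matrix (Fin r) (Fin r) ℂ))]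
  -- 0 ∈ D since the support is nonempty
  have hne : A.support.Nonempty := by
    by_contra hemp
    rw [Finset.not_nonempty_iff_eq_empty] at hemp
    have := Kreal 0
    rw [hemp, Finset.sum_empty, if_pos rfl] at this
    have i : Fin r := ⟨0, hr⟩
    have := congrFun (congrFun this i) i
    simp [Matrix.one_apply] at this
  obtain ⟨m, hm⟩ := hne
  have h0D : (0 : ℤ) ∈ D :=
    Finset.mem_image.mpr ⟨(m, m), Finset.mem_product.mpr ⟨hm, hm⟩, by simp⟩
  rw [if_pos h0D]
end

section
/- Let F, G ∈ L²(ℝ, ℝ^{r×r}) each have orthonormal integer translates, G satisfy the two-scale relation G = Σ_j F(2·−j) B_j, F be refinable with mask A, and suppose ∫ F(x)^T G(x+k) dx = 0 for all k ∈ ℤ. Then A^♯(z)B(z) + A^♯(−z)B(−z) = 0 for all z on the unit circle. -/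
open Matrix Finset MeasureTheory

namespace QMFaux

variable {r : ℕ}

lemma memLp_shift {F : ℝ → Matrix (Fin r) (Fin r) ℝ}
    (hFL2 : ∀ i j : Fin r, MemLp (fun x => F x i j) 2 volume) (c : ℝ) (l p : Fin r) :
    MemLp (fun x : ℝ => F (x + c) l p) 2 volume :=
  (hFL2 l p).comp_measurePreserving (measurePreserving_add_right volume c)

lemma int_prod {F : ℝ → Matrix (Fin r) (Fin r) ℝ}
    (hFL2 : ∀ i j : Fin r, MemLp (fun x => F x i j) 2 volume) (c d : ℝ) (l p q : Fin r) :
    Integrable (fun x : ℝ => F (x + c) l p * F (x + d) l q) volume := by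
  rw [← memLp_one_iff_integrable]
  have h := (memLp_shift hFL2 d l q).smul (memLp_shift hFL2 c l p)
    (p := 2) (q := 2) (r := 1) (hpqr := ⟨by rw [inv_one]; exact ENNReal.inv_two_add_inv_two⟩)
  exact h

lemma int_prod2 {F : ℝ → Matrix (Fin r) (Fin r) ℝ}
    (hFL2 : ∀ i j : Fin r, MemLp (fun x => F x i j) 2 volume) (c d : ℝ) (l p q : Fin r) :
    Integrable (fun x : ℝ => F (2 * x + c) l p * F (2 * x + d) l q) volume :=
  (int_prod hFL2 c d l p q).comp_mul_left' two_ne_zero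

lemma cross_sum {F : ℝ → Matrix (Fin r) (Fin r) ℝ}
    (hFL2 : ∀ i j : Fin r, MemLp (fun x => F x i j) 2 volume)
    (hFOrth : ∀ k : ℤ, ∀ i j : Fin r,
      (∫ x : ℝ, ((F x)ᵀ * F (x + (k : ℝ))) i j) =
        (if k = 0 then (1 : Matrix (Fin r) (Fin r) ℝ) else 0) i j)
    (a b : ℤ) (p q : Fin r) :
    (∫ x : ℝ, ((F (2 * x - (a : ℝ)))ᵀ * F (2 * x - (b : ℝ))) p q)
      = (2 : ℝ)⁻¹ * (if a = b then (1 : Matrix (Fin r) (Fin r) ℝ) else 0) p q := by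
  have hint : ∀ l : Fin r,
      Integrable (fun x : ℝ => F (2 * x - (a : ℝ)) l p * F (2 * x - (b : ℝ)) l q) volume := by
    intro l
    simpa [sub_eq_add_neg] using int_prod2 hFL2 (-(a : ℝ)) (-(b : ℝ)) l p q
  have h1 : (∫ x : ℝ, ((F (2 * x - (a : ℝ)))ᵀ * F (2 * x - (b : ℝ))) p q)
      = ∑ l : Fin r, ∫ x : ℝ, F (2 * x - (a : ℝ)) l p * F (2 * x - (b : ℝ)) l q := by
    rw [← integral_finset_sum _ (fun l _ => hint l)]
    refine integral_congr_ae (Filter.Eventually.of_forall fun x => ?_)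
    simp [Matrix.mul_apply]
  have h2 : ∀ l : Fin r, (∫ x : ℝ, F (2 * x - (a : ℝ)) l p * F (2 * x - (b : ℝ)) l q)
      = (2 : ℝ)⁻¹ * ∫ x : ℝ, F x l p * F (x + ((a : ℝ) - b)) l q := by
    intro l
    have e1 : (∫ x : ℝ, F (2 * x - (a : ℝ)) l p * F (2 * x - (b : ℝ)) l q)
        = ∫ x : ℝ, (fun y : ℝ => F (y - (a : ℝ)) l p * F (y - (b : ℝ)) l q) (2 * x) := rfl
    rw [e1, MeasureTheory.Measure.integral_comp_mul_left
      (fun y : ℝ => F (y - (a : ℝ)) l p * F (y - (b : ℝ)) l q) 2]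
    have e3 : (∫ y : ℝ, F (y - (a : ℝ)) l p * F (y - (b : ℝ)) l q)
        = ∫ x : ℝ, F x l p * F (x + ((a : ℝ) - b)) l q := by
      have h7 := integral_add_right_eq_self (μ := volume)
        (fun x : ℝ => F x l p * F (x + ((a : ℝ) - b)) l q) (-(a : ℝ))
      rw [← h7]
      refine integral_congr_ae (Filter.Eventually.of_forall fun y => ?_)
      show F (y - (a : ℝ)) l p * F (y - (b : ℝ)) l q
        = F (y + -(a : ℝ)) l p * F (y + -(a : ℝ) + ((a : ℝ) - b)) l q
      rw [show y + -(a : ℝ) = y - (a : ℝ) by ring,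
        show y - (a : ℝ) + ((a : ℝ) - (b : ℝ)) = y - b by ring]
    rw [e3]
    norm_num
  simp_rw [h1, h2, ← Finset.mul_sum]
  congr 1
  have h5 : ∀ l : Fin r, Integrable (fun x : ℝ => F x l p * F (x + ((a : ℝ) - b)) l q) volume := by
    intro l; simpa using int_prod hFL2 0 ((a : ℝ) - b) l p q
  rw [← integral_finset_sum _ (fun l _ => h5 l)]
  have h6 : (∫ x : ℝ, ∑ l : Fin r, F x l p * F (x + ((a : ℝ) - b)) l q)
      = ∫ x : ℝ, ((F x)ᵀ * F (x + ((a - b : ℤ) : ℝ))) p q := by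
    push_cast
    refine integral_congr_ae (Filter.Eventually.of_forall fun x => ?_)
    simp [Matrix.mul_apply]
  rw [h6, hFOrth (a - b) p q]; simp [sub_eq_zero]

lemma key_orth {F G : ℝ → Matrix (Fin r) (Fin r) ℝ}
    {A B : ℤ →₀ Matrix (Fin r) (Fin r) ℝ}
    (hFL2 : ∀ i j : Fin r, MemLp (fun x => F x i j) 2 volume)
    (hFOrth : ∀ k : ℤ, ∀ i j : Fin r,
      (∫ x : ℝ, ((F x)ᵀ * F (x + (k : ℝ))) i j) =
        (if k = 0 then (1 : Matrix (Fin r) (Fin r) ℝ) else 0) i j)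
    (hCross : ∀ k : ℤ, ∀ i j : Fin r,
      (∫ x : ℝ, ((F x)ᵀ * G (x + (k : ℝ))) i j) = 0)
    (hRef : ∀ x : ℝ, F x = ∑ m ∈ A.support, F (2 * x - (m : ℝ)) * A m)
    (hTwoScale : ∀ x : ℝ, G x = ∑ m ∈ B.support, F (2 * x - (m : ℝ)) * B m)
    (k : ℤ) (i j : Fin r) :
    (∑ m ∈ A.support, ((A m)ᵀ * B (m + 2 * k)) i j) = 0 := by
  -- Step 1: pointwise expansion of the integrand
  have hpt : ∀ x : ℝ, ((F x)ᵀ * G (x + (k : ℝ))) i j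
      = ∑ m ∈ A.support, ∑ n ∈ B.support, ∑ q : Fin r, ∑ p : Fin r,
          (A m p i * B n q j) *
            ((F (2 * x - (m : ℝ)))ᵀ * F (2 * x - ((n - 2 * k : ℤ) : ℝ))) p q := by
    intro x
    have hmat : (F x)ᵀ * G (x + (k : ℝ))
        = ∑ m ∈ A.support, ∑ n ∈ B.support,
            (A m)ᵀ * ((F (2 * x - (m : ℝ)))ᵀ * F (2 * x - ((n - 2 * k : ℤ) : ℝ))) * B n := by
      rw [hRef x, hTwoScale (x + (k : ℝ)), Matrix.transpose_sum, Finset.sum_mul]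
      refine Finset.sum_congr rfl fun m _ => ?_
      rw [Finset.mul_sum]
      refine Finset.sum_congr rfl fun n _ => ?_
      rw [show 2 * (x + (k : ℝ)) - (n : ℝ) = 2 * x - ((n - 2 * k : ℤ) : ℝ) by push_cast; ring,
        Matrix.transpose_mul, Matrix.mul_assoc, Matrix.mul_assoc, Matrix.mul_assoc]
    rw [hmat]
    rw [Matrix.sum_apply]
    refine Finset.sum_congr rfl fun m _ => ?_
    rw [Matrix.sum_apply]
    refine Finset.sum_congr rfl fun n _ => ?_
    rw [Matrix.mul_apply]
    refine Finset.sum_congr rfl fun q _ => ?_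
    rw [Matrix.mul_apply, Finset.sum_mul]
    refine Finset.sum_congr rfl fun p _ => ?_
    simp only [Matrix.transpose_apply]
    ring
  -- Step 2: integrability
  have hIP : ∀ (m n : ℤ) (p q : Fin r),
      Integrable (fun x : ℝ =>
        ((F (2 * x - (m : ℝ)))ᵀ * F (2 * x - ((n - 2 * k : ℤ) : ℝ))) p q) volume := by
    intro m n p q
    have he : ∀ x : ℝ, ((F (2 * x - (m : ℝ)))ᵀ * F (2 * x - ((n - 2 * k : ℤ) : ℝ))) p q
        = ∑ l : Fin r, F (2 * x + (-(m : ℝ))) l p * F (2 * x + (-((n - 2 * k : ℤ) : ℝ))) l q := by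
      intro x
      simp [Matrix.mul_apply, sub_eq_add_neg]
    rw [show (fun x : ℝ => ((F (2 * x - (m : ℝ)))ᵀ * F (2 * x - ((n - 2 * k : ℤ) : ℝ))) p q)
        = fun x : ℝ => ∑ l : Fin r, F (2 * x + (-(m : ℝ))) l p
            * F (2 * x + (-((n - 2 * k : ℤ) : ℝ))) l q from funext he]
    exact integrable_finset_sum _ (fun l _ => int_prod2 hFL2 _ _ l p q)
  have hI : ∀ (m n : ℤ) (p q : Fin r),
      Integrable (fun x : ℝ => (A m p i * B n q j) *
        ((F (2 * x - (m : ℝ)))ᵀ * F (2 * x - ((n - 2 * k : ℤ) : ℝ))) p q) volume :=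
    fun m n p q => (hIP m n p q).const_mul _
  -- Step 3: swap integral and sums
  have h0 := hCross k i j
  rw [show (fun x : ℝ => ((F x)ᵀ * G (x + (k : ℝ))) i j)
      = fun x : ℝ => ∑ m ∈ A.support, ∑ n ∈ B.support, ∑ q : Fin r, ∑ p : Fin r,
          (A m p i * B n q j) *
            ((F (2 * x - (m : ℝ)))ᵀ * F (2 * x - ((n - 2 * k : ℤ) : ℝ))) p q
    from funext hpt] at h0
  rw [integral_finset_sum _ (fun m _ => integrable_finset_sum _ (fun n _ =>
    integrable_finset_sum _ (fun q _ => integrable_finset_sum _ (fun p _ => hI m n p q))))] at h0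
  have h1 : ∀ m ∈ A.support,
      (∫ x : ℝ, ∑ n ∈ B.support, ∑ q : Fin r, ∑ p : Fin r,
          (A m p i * B n q j) *
            ((F (2 * x - (m : ℝ)))ᵀ * F (2 * x - ((n - 2 * k : ℤ) : ℝ))) p q)
        = (2 : ℝ)⁻¹ * ((A m)ᵀ * B (m + 2 * k)) i j := by
    intro m _
    rw [integral_finset_sum _ (fun n _ => integrable_finset_sum _ (fun q _ =>
      integrable_finset_sum _ (fun p _ => hI m n p q)))]
    have h2 : ∀ n ∈ B.support,
        (∫ x : ℝ, ∑ q : Fin r, ∑ p : Fin r,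
            (A m p i * B n q j) *
              ((F (2 * x - (m : ℝ)))ᵀ * F (2 * x - ((n - 2 * k : ℤ) : ℝ))) p q)
          = if n = m + 2 * k then (2 : ℝ)⁻¹ * ((A m)ᵀ * B n) i j else 0 := by
      intro n _
      rw [integral_finset_sum _ (fun q _ => integrable_finset_sum _ (fun p _ => hI m n p q))]
      have h3 : ∀ q : Fin r, (∫ x : ℝ, ∑ p : Fin r,
            (A m p i * B n q j) *
              ((F (2 * x - (m : ℝ)))ᵀ * F (2 * x - ((n - 2 * k : ℤ) : ℝ))) p q)
          = ∑ p : Fin r, (A m p i * B n q j) *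
              ((2 : ℝ)⁻¹ * (if m = n - 2 * k then (1 : Matrix (Fin r) (Fin r) ℝ) else 0) p q) := by
        intro q
        rw [integral_finset_sum _ (fun p _ => hI m n p q)]
        refine Finset.sum_congr rfl fun p _ => ?_
        rw [MeasureTheory.integral_const_mul, cross_sum hFL2 hFOrth m (n - 2 * k) p q]
      simp_rw [h3]
      by_cases hmn : m = n - 2 * k
      · have hnm : n = m + 2 * k := by omega
        simp only [if_pos hmn, if_pos hnm, Matrix.one_apply]
        rw [Matrix.mul_apply, Finset.mul_sum]
        rw [Finset.sum_comm]
        refine Finset.sum_congr rfl fun p _ => ?_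
        simp only [mul_ite, mul_one, mul_zero, ite_mul, zero_mul, Matrix.transpose_apply,
          Finset.sum_ite_eq, Finset.mem_univ, if_pos]
        ring
      · have hnm : ¬(n = m + 2 * k) := by omega
        simp [hmn, hnm]
    rw [Finset.sum_congr rfl h2, Finset.sum_ite_eq' B.support (m + 2 * k)
      (fun n => (2 : ℝ)⁻¹ * ((A m)ᵀ * B n) i j)]
    by_cases hb : m + 2 * k ∈ B.support
    · rw [if_pos hb]
    · rw [if_neg hb, Finsupp.notMem_support_iff.mp hb]
      simp
  rw [Finset.sum_congr rfl h1, ← Finset.mul_sum] at h0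
  rw [mul_eq_zero] at h0
  exact h0.resolve_left (by norm_num)

lemma sharp_mul_symbol {A B : ℤ →₀ Matrix (Fin r) (Fin r) ℝ} {w : ℂ} (hw : w ≠ 0) :
    mSharp A w * mSymbol B w
      = ∑ m ∈ A.support, ∑ n ∈ B.support,
          w ^ (n - m) • (((A m).map Complex.ofReal)ᵀ * (B n).map Complex.ofReal) := by
  unfold mSharp mSymbol
  rw [Matrix.transpose_sum, Finset.sum_mul]
  refine Finset.sum_congr rfl fun m _ => ?_
  rw [Finset.mul_sum]
  refine Finset.sum_congr rfl fun n _ => ?_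
  rw [Matrix.transpose_smul, smul_mul_smul_comm, _root_.inv_zpow, ← _root_.zpow_neg, ← zpow_add₀ hw,
    neg_add_eq_sub]

end QMFaux

open QMFaux

/-- If `F` and `G` each have orthonormal integer translates, `F` is refinable with
mask `A`, `G` satisfies the two-scale relation with mask `B`, and the translates of
`F` and `G` are mutually orthogonal, then the second QMF condition holds. -/
theorem orthogonality_implies_second_QMF {r : ℕ}
    (F G : ℝ → Matrix (Fin r) (Fin r) ℝ)
    (A B : ℤ →₀ Matrix (Fin r) (Fin r) ℝ)
    (hFL2 : ∀ i j : Fin r, MemLp (fun x => F x i j) 2 volume)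
    (hGL2 : ∀ i j : Fin r, MemLp (fun x => G x i j) 2 volume)
    (hFOrth : ∀ k : ℤ, ∀ i j : Fin r,
      (∫ x : ℝ, ((F x)ᵀ * F (x + (k : ℝ))) i j) =
        (if k = 0 then (1 : Matrix (Fin r) (Fin r) ℝ) else 0) i j)
    (hGOrth : ∀ k : ℤ, ∀ i j : Fin r,
      (∫ x : ℝ, ((G x)ᵀ * G (x + (k : ℝ))) i j) =
        (if k = 0 then (1 : Matrix (Fin r) (Fin r) ℝ) else 0) i j)
    (hCross : ∀ k : ℤ, ∀ i j : Fin r,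
      (∫ x : ℝ, ((F x)ᵀ * G (x + (k : ℝ))) i j) = 0)
    (hRef : ∀ x : ℝ, F x = ∑ m ∈ A.support, F (2 * x - (m : ℝ)) * A m)
    (hTwoScale : ∀ x : ℝ, G x = ∑ m ∈ B.support, F (2 * x - (m : ℝ)) * B m) :
    ∀ z : ℂ, ‖z‖ = 1 →
      mSharp A z * mSymbol B z + mSharp A (-z) * mSymbol B (-z) = 0 := by
  intro z hz
  have hz0 : z ≠ 0 := by
    intro h; rw [h] at hz; simp at hz
  have hz0' : -z ≠ 0 := neg_ne_zero.mpr hz0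
  set T : ℤ → ℤ → Matrix (Fin r) (Fin r) ℂ :=
    fun m n => ((A m).map Complex.ofReal)ᵀ * (B n).map Complex.ofReal with hT
  have hcoef : ∀ m n : ℤ,
      z ^ (n - m) • T m n + (-z) ^ (n - m) • T m n
        = if Even (n - m) then (2 * z ^ (n - m)) • T m n else 0 := by
    intro m n
    rcases Int.even_or_odd (n - m) with h | h
    · rw [if_pos h, h.neg_zpow, ← add_smul]
      congr 1; ring
    · rw [if_neg (Int.not_even_iff_odd.mpr h), h.neg_zpow, ← add_smul]
      simp
  set K : Finset ℤ := (B.support ×ˢ A.support).image (fun p : ℤ × ℤ => (p.1 - p.2) / 2) with hK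
  rw [sharp_mul_symbol hz0, sharp_mul_symbol hz0', ← Finset.sum_add_distrib]
  have hinner : ∀ m ∈ A.support,
      ((∑ n ∈ B.support, z ^ (n - m) • T m n)
          + ∑ n ∈ B.support, (-z) ^ (n - m) • T m n)
        = ∑ kk ∈ K, (2 * z ^ (2 * kk)) • T m (m + 2 * kk) := by
    intro m hm
    rw [← Finset.sum_add_distrib, Finset.sum_congr rfl fun n _ => hcoef m n,
      ← Finset.sum_filter]
    refine Eq.trans ?_ (Finset.sum_subset
      (Finset.filter_subset (fun kk => m + 2 * kk ∈ B.support) K) ?_)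
    · refine Finset.sum_nbij' (fun n => (n - m) / 2) (fun kk => m + 2 * kk) ?_ ?_ ?_ ?_ ?_
      · intro n hn
        simp only [Finset.mem_filter] at hn ⊢
        obtain ⟨hn1, hn2⟩ := hn
        obtain ⟨c, hc⟩ := hn2
        constructor
        · rw [hK]
          exact Finset.mem_image.mpr ⟨(n, m), Finset.mem_product.mpr ⟨hn1, hm⟩, rfl⟩
        · show m + 2 * ((n - m) / 2) ∈ B.support
          rw [show m + 2 * ((n - m) / 2) = n by omega]
          exact hn1
      · intro kk hkk
        simp only [Finset.mem_filter] at hkk ⊢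
        refine ⟨hkk.2, ?_⟩
        show Even (m + 2 * kk - m)
        exact ⟨kk, by ring⟩
      · intro n hn
        simp only [Finset.mem_filter] at hn
        obtain ⟨c, hc⟩ := hn.2
        show m + 2 * ((n - m) / 2) = n
        omega
      · intro kk _
        show (m + 2 * kk - m) / 2 = kk
        omega
      · intro n hn
        simp only [Finset.mem_filter] at hn
        obtain ⟨c, hc⟩ := hn.2
        have h2 : 2 * ((n - m) / 2) = n - m := by omega
        show (2 * z ^ (n - m)) • T m n = (2 * z ^ (2 * ((n - m) / 2))) • T m (m + 2 * ((n - m) / 2))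
        rw [h2, show m + (n - m) = n by ring]
    · intro kk hkk hkk2
      have hb : m + 2 * kk ∉ B.support := by
        intro hb
        exact hkk2 (Finset.mem_filter.mpr ⟨hkk, hb⟩)
      have : B (m + 2 * kk) = 0 := Finsupp.notMem_support_iff.mp hb
      simp [hT, this]
  rw [Finset.sum_congr rfl hinner, Finset.sum_comm]
  refine Finset.sum_eq_zero fun kk _ => ?_
  have hmat : (∑ m ∈ A.support, T m (m + 2 * kk)) = 0 := by
    ext i j
    have h := key_orth hFL2 hFOrth hCross hRef hTwoScale kk i j
    simp only [Matrix.sum_apply, Matrix.mul_apply, Matrix.transpose_apply] at h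
    simp only [hT, Matrix.sum_apply, Matrix.mul_apply, Matrix.transpose_apply,
      Matrix.map_apply, Matrix.zero_apply]
    exact_mod_cast h
  rw [← Finset.smul_sum, hmat, smul_zero]
end
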